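/- arXiv:0809.0740 — 7 statements merged into one kernel-verified Lean document; each statement's English description precedes it below -/
import Mathlib

section
/- If (X, d) is a compact metric space that is not quasihypermetric, then M(X) = ∞, i.e. the supremum of I(μ) over all finite signed Borel measures μ on X of total mass 1 is infinite. -/
open MeasureTheory Filter Topology

/-- `dmu μ x = ∫ d(x,y) dμ(y)`, defined via the Jordan decomposition of the
finite signed Borel measure `μ`. -/
noncomputable def dmu {X : Type*} [MetricSpace X] [MeasurableSpace X]
    (μ : SignedMeasure X) (x : X) : ℝ :=
  (∫ y, dist x y ∂μ.toJordanDecomposition.posPart) -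
  (∫ y, dist x y ∂μ.toJordanDecomposition.negPart)

/-- `Ibil μ ν = ∫∫ d(x,y) dμ(x)dν(y)`. -/
noncomputable def Ibil {X : Type*} [MetricSpace X] [MeasurableSpace X]
    (μ ν : SignedMeasure X) : ℝ :=
  (∫ x, dmu ν x ∂μ.toJordanDecomposition.posPart) -
  (∫ x, dmu ν x ∂μ.toJordanDecomposition.negPart)

/-- The energy integral `I(μ) = I(μ, μ)`. -/
noncomputable def Ien {X : Type*} [MetricSpace X] [MeasurableSpace X]
    (μ : SignedMeasure X) : ℝ := Ibil μ μ

/-- `(X, d)` is quasihypermetric: for all `n`, reals `α i` summing to `0` and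
points `x i`, `∑ i j, α i * α j * d(x i, x j) ≤ 0`. -/
def Quasihypermetric (X : Type*) [MetricSpace X] : Prop :=
  ∀ (n : ℕ) (α : Fin n → ℝ) (x : Fin n → X),
    (∑ i, α i) = 0 → ∑ i, ∑ j, α i * α j * dist (x i) (x j) ≤ 0

/-- The constant `M(X) = sup { I(μ) : μ a signed Borel measure of total mass 1 }`,
as an extended real number. -/
noncomputable def MXsup (X : Type*) [MetricSpace X] [MeasurableSpace X] : EReal :=
  ⨆ μ : {μ : SignedMeasure X // μ Set.univ = 1}, ((Ien μ.1 : ℝ) : EReal)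

open scoped NNReal ENNReal

section Helpers

variable {X : Type*} [MetricSpace X] [MeasurableSpace X] [BorelSpace X]

lemma myIntegrable [CompactSpace X] (μ : Measure X) [IsFiniteMeasure μ]
    {f : X → ℝ} (hf : Continuous f) : Integrable f μ :=
  hf.integrable_of_hasCompactSupport ((isClosed_tsupport f).isCompact)

omit [MetricSpace X] [BorelSpace X] in
lemma myFiniteSum {ι : Type*} (s : Finset ι) (μ : ι → Measure X)
    [∀ i, IsFiniteMeasure (μ i)] : IsFiniteMeasure (∑ i ∈ s, μ i) := by
  constructor
  rw [Measure.finset_sum_apply]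
  exact ENNReal.sum_lt_top.2 fun i _ => measure_lt_top _ _

lemma myJordan [CompactSpace X] (p n : Measure X) [IsFiniteMeasure p] [IsFiniteMeasure n]
    {f : X → ℝ} (hf : Continuous f) :
    (∫ x, f x ∂(p.toSignedMeasure - n.toSignedMeasure).toJordanDecomposition.posPart) -
    (∫ x, f x ∂(p.toSignedMeasure - n.toSignedMeasure).toJordanDecomposition.negPart)
      = (∫ x, f x ∂p) - (∫ x, f x ∂n) := by
  set μ := p.toSignedMeasure - n.toSignedMeasure with hμdef
  have hmeq : μ.toJordanDecomposition.posPart + n = μ.toJordanDecomposition.negPart + p := by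
    ext s hs
    have h2 : μ s = (μ.toJordanDecomposition.posPart s).toReal -
        (μ.toJordanDecomposition.negPart s).toReal := by
      conv_lhs => rw [← μ.toSignedMeasure_toJordanDecomposition]
      exact Measure.toSignedMeasure_sub_apply hs
    have h1 : μ s = (p s).toReal - (n s).toReal := Measure.toSignedMeasure_sub_apply hs
    rw [Measure.add_apply, Measure.add_apply]
    have key : ((μ.toJordanDecomposition.posPart s) + n s).toReal
        = ((μ.toJordanDecomposition.negPart s) + p s).toReal := by
      rw [ENNReal.toReal_add (measure_ne_top _ _) (measure_ne_top _ _),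
        ENNReal.toReal_add (measure_ne_top _ _) (measure_ne_top _ _)]
      linarith
    exact (ENNReal.toReal_eq_toReal_iff'
      (ENNReal.add_ne_top.2 ⟨measure_ne_top _ _, measure_ne_top _ _⟩)
      (ENNReal.add_ne_top.2 ⟨measure_ne_top _ _, measure_ne_top _ _⟩)).mp key
  have hi1 := myIntegrable μ.toJordanDecomposition.posPart hf
  have hi2 := myIntegrable μ.toJordanDecomposition.negPart hf
  have hip := myIntegrable p hf
  have hin := myIntegrable n hf
  have e1 := integral_add_measure hi1 hin
  have e2 := integral_add_measure hi2 hip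
  rw [hmeq] at e1
  rw [e2] at e1
  linarith

lemma myIntegralComb [CompactSpace X] {m : ℕ} (c : Fin m → ℝ) (y : Fin m → X) {f : X → ℝ}
    (hf : Continuous f) :
    (∫ z, f z ∂(∑ i, (c i).toNNReal • Measure.dirac (y i)))
      = ∑ i, max (c i) 0 * f (y i) := by
  rw [integral_finset_sum_measure]
  · refine Finset.sum_congr rfl fun i _ => ?_
    rw [integral_smul_nnreal_measure, integral_dirac]
    simp [NNReal.smul_def, Real.coe_toNNReal']
  · intro i _
    exact myIntegrable _ hf

end Helpers

/-- If a compact metric space is not quasihypermetric, then `M(X) = ∞`. -/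
theorem stmt_0 {X : Type*} [MetricSpace X] [CompactSpace X]
    [MeasurableSpace X] [BorelSpace X]
    (h : ¬ Quasihypermetric X) : MXsup X = ⊤ := by
  rw [Quasihypermetric] at h
  push_neg at h
  obtain ⟨m, α, x, hsum, hE⟩ := h
  have hm : 0 < m := by
    rcases Nat.eq_zero_or_pos m with h0 | h0
    · subst h0; simp at hE
    · exact h0
  set E : ℝ := ∑ i, ∑ j, α i * α j * dist (x i) (x j) with hEdef
  set x0 : X := x ⟨0, hm⟩ with hx0
  set A : ℝ := ∑ i, α i * dist x0 (x i) with hAdef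
  -- the family of measures
  have main : ∀ t : ℝ, ∃ μ : SignedMeasure X, μ Set.univ = 1 ∧
      Ien μ = 2 * t * A + t ^ 2 * E := by
    intro t
    set P : Measure X :=
      Measure.dirac x0 + ∑ i, (t * α i).toNNReal • Measure.dirac (x i) with hPdef
    set N : Measure X := ∑ i, (-(t * α i)).toNNReal • Measure.dirac (x i) with hNdef
    have : IsFiniteMeasure (∑ i, (t * α i).toNNReal • Measure.dirac (x i)) :=
      myFiniteSum _ _
    have hPfin : IsFiniteMeasure P := by rw [hPdef]; infer_instance
    have hNfin : IsFiniteMeasure N := myFiniteSum _ _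
    -- integral against P and N of a continuous function
    have hint : ∀ f : X → ℝ, Continuous f →
        (∫ z, f z ∂P) - (∫ z, f z ∂N) = f x0 + ∑ i, t * α i * f (x i) := by
      intro f hf
      rw [hPdef, hNdef, integral_add_measure (myIntegrable _ hf) (myIntegrable _ hf),
        integral_dirac, myIntegralComb _ _ hf, myIntegralComb _ _ hf]
      have : ∀ i, max (t * α i) 0 * f (x i) - max (-(t * α i)) 0 * f (x i)
          = t * α i * f (x i) := by
        intro i
        rcases le_total 0 (t * α i) with hle | hle
        · rw [max_eq_left hle, max_eq_right (by linarith)]; ring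
        · rw [max_eq_right hle, max_eq_left (by linarith)]; ring
      rw [add_sub_assoc, ← Finset.sum_sub_distrib]
      simp only [this]
    set μ : SignedMeasure X := P.toSignedMeasure - N.toSignedMeasure with hμdef
    have hmass : μ Set.univ = 1 := by
      rw [hμdef, Measure.toSignedMeasure_sub_apply MeasurableSet.univ]
      have h1 : P.real Set.univ = ∫ _z, (1 : ℝ) ∂P := by
        rw [integral_const, smul_eq_mul, mul_one]
      have h2 : N.real Set.univ = ∫ _z, (1 : ℝ) ∂N := by
        rw [integral_const, smul_eq_mul, mul_one]
      rw [h1, h2, hint _ continuous_const]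
      have : ∑ i, t * α i * 1 = t * ∑ i, α i := by
        rw [Finset.mul_sum]; exact Finset.sum_congr rfl fun i _ => by ring
      rw [this, hsum]
      ring
    -- dmu computation
    set g : X → ℝ := fun z => dist z x0 + ∑ i, t * α i * dist z (x i) with hgdef
    have hgcont : Continuous g := by
      apply Continuous.add
      · exact continuous_id.dist continuous_const
      · apply continuous_finset_sum
        intro i _
        exact continuous_const.mul (continuous_id.dist continuous_const)
    have hdmu : ∀ z, dmu μ z = g z := by
      intro z
      have hc : Continuous fun y : X => dist z y := continuous_const.dist continuous_id
      rw [dmu, hμdef, myJordan P N hc, hint _ hc]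
    have hIen : Ien μ = g x0 + ∑ i, t * α i * g (x i) := by
      rw [Ien, Ibil]
      have : ∀ z, dmu μ z = g z := hdmu
      calc (∫ z, dmu μ z ∂μ.toJordanDecomposition.posPart) -
            (∫ z, dmu μ z ∂μ.toJordanDecomposition.negPart)
          = (∫ z, g z ∂μ.toJordanDecomposition.posPart) -
            (∫ z, g z ∂μ.toJordanDecomposition.negPart) := by
            simp only [hdmu]
        _ = (∫ z, g z ∂P) - (∫ z, g z ∂N) := by rw [hμdef]; exact myJordan P N hgcont
        _ = g x0 + ∑ i, t * α i * g (x i) := hint _ hgcont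
    refine ⟨μ, hmass, ?_⟩
    rw [hIen, hgdef]
    simp only [dist_self, zero_add]
    have e1 : ∑ i, t * α i * dist x0 (x i) = t * A := by
      rw [hAdef, Finset.mul_sum]
      exact Finset.sum_congr rfl fun i _ => by ring
    have e2 : ∑ i, t * α i * (dist (x i) x0 + ∑ j, t * α j * dist (x i) (x j))
        = t * A + t ^ 2 * E := by
      have : ∀ i ∈ Finset.univ, t * α i * (dist (x i) x0 + ∑ j, t * α j * dist (x i) (x j))
          = t * (α i * dist x0 (x i)) + t ^ 2 * ∑ j, α i * α j * dist (x i) (x j) := by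
        intro i _
        rw [dist_comm (x i) x0, mul_add, Finset.mul_sum, Finset.mul_sum]
        congr 1
        · ring
        · exact Finset.sum_congr rfl fun j _ => by ring
      rw [Finset.sum_congr rfl this, Finset.sum_add_distrib, ← Finset.mul_sum, ← Finset.mul_sum,
        ← hAdef, ← hEdef]
    rw [e1, e2]
    ring
  -- conclude
  rw [MXsup, iSup_eq_top]
  intro b hb
  obtain ⟨r, hr1, hr2⟩ := EReal.lt_iff_exists_real_btwn.mp hb
  have hEpos : 0 < E := hE
  set t : ℝ := max 1 ((2 * |A| + |r| + 1) / E) with htdef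
  have ht1 : 1 ≤ t := le_max_left _ _
  have htE : 2 * |A| + |r| + 1 ≤ t * E := by
    rw [← div_le_iff₀ hEpos]  -- (2|A|+|r|+1)/E ≤ t
    exact le_max_right _ _
  obtain ⟨μ, hmass, hval⟩ := main t
  refine ⟨⟨μ, hmass⟩, ?_⟩
  have hgt : r < Ien μ := by
    rw [hval]
    nlinarith [neg_abs_le A, le_abs_self r, abs_nonneg A, abs_nonneg r,
      mul_nonneg (by linarith : (0:ℝ) ≤ t - 1) (by positivity : (0:ℝ) ≤ |r| + 1),
      mul_nonneg (by linarith : (0:ℝ) ≤ t) (by linarith : (0:ℝ) ≤ t * E - 2 * |A| - (|r| + 1))]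
  exact lt_trans hr1 (by exact_mod_cast EReal.coe_lt_coe_iff.mpr hgt)
end

section
/- A compact metric space (X, d) is quasihypermetric if and only if I(μ) ≤ 0 for every finite signed Borel measure μ on X of total mass 0. -/
open MeasureTheory Filter Topology
open scoped ENNReal NNReal

section Aux

variable {X : Type*} [MetricSpace X] [CompactSpace X] [MeasurableSpace X] [BorelSpace X]

lemma cont_integrable {f : X → ℝ} (hf : Continuous f) (μ : Measure X) [IsFiniteMeasure μ] :
    Integrable f μ := by
  have h := hf.continuousOn.integrableOn_compact (isCompact_univ (X := X)) (μ := μ)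
  rwa [integrableOn_univ] at h

lemma dist_integrable (x : X) (μ : Measure X) [IsFiniteMeasure μ] :
    Integrable (fun y => dist x y) μ :=
  cont_integrable (continuous_const.dist continuous_id) μ

lemma int_dist_lip (ρ : Measure X) [IsFiniteMeasure ρ] :
    LipschitzWith (ρ Set.univ).toNNReal (fun x => ∫ y, dist x y ∂ρ) := by
  apply LipschitzWith.of_dist_le_mul
  intro x x'
  rw [Real.dist_eq, ← integral_sub (dist_integrable x ρ) (dist_integrable x' ρ)]
  calc |∫ y, (dist x y - dist x' y) ∂ρ|
      ≤ ∫ y, |dist x y - dist x' y| ∂ρ := by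
        simpa [Real.norm_eq_abs] using
          norm_integral_le_integral_norm (fun y => dist x y - dist x' y) (μ := ρ)
    _ ≤ ∫ _y, dist x x' ∂ρ := by
        apply integral_mono _ (integrable_const _) (fun y => abs_dist_sub_le x x' y)
        exact ((dist_integrable x ρ).sub (dist_integrable x' ρ)).abs
    _ = (ρ Set.univ).toNNReal * dist x x' := by
        rw [integral_const, smul_eq_mul, measureReal_def, ← ENNReal.coe_toNNReal_eq_toReal]

lemma int_dist_cont (ρ : Measure X) [IsFiniteMeasure ρ] :
    Continuous (fun x => ∫ y, dist x y ∂ρ) := (int_dist_lip ρ).continuous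

lemma jordan_apply (μ : SignedMeasure X) {s : Set X} (hs : MeasurableSet s) :
    μ s = (μ.toJordanDecomposition.posPart s).toReal -
      (μ.toJordanDecomposition.negPart s).toReal := by
  conv_lhs => rw [← μ.toSignedMeasure_toJordanDecomposition]
  rw [JordanDecomposition.toSignedMeasure]
  exact Measure.toSignedMeasure_sub_apply hs

lemma jordan_integral {μ : SignedMeasure X} {P N : Measure X} [IsFiniteMeasure P]
    [IsFiniteMeasure N]
    (h : ∀ s : Set X, MeasurableSet s → μ s = (P s).toReal - (N s).toReal)
    {f : X → ℝ} (hf : Continuous f) :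
    (∫ x, f x ∂μ.toJordanDecomposition.posPart) -
      (∫ x, f x ∂μ.toJordanDecomposition.negPart) = (∫ x, f x ∂P) - (∫ x, f x ∂N) := by
  set Pp := μ.toJordanDecomposition.posPart with hPp
  set Nn := μ.toJordanDecomposition.negPart with hNn
  have hmeq : Pp + N = P + Nn := by
    ext s hs
    have h1 := h s hs
    have h2 := jordan_apply μ hs
    rw [← hPp, ← hNn] at h2
    have h3 : (Pp s).toReal + (N s).toReal = (P s).toReal + (Nn s).toReal := by
      rw [h1] at h2; linarith
    have e1 : Pp s ≠ ⊤ := measure_ne_top _ _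
    have e2 : N s ≠ ⊤ := measure_ne_top _ _
    have e3 : P s ≠ ⊤ := measure_ne_top _ _
    have e4 : Nn s ≠ ⊤ := measure_ne_top _ _
    rw [Measure.add_apply, Measure.add_apply]
    rw [← ENNReal.toReal_add e1 e2, ← ENNReal.toReal_add e3 e4] at h3
    exact (ENNReal.toReal_eq_toReal_iff' (by finiteness) (by finiteness)).mp h3
  have key : (∫ x, f x ∂Pp) + (∫ x, f x ∂N) = (∫ x, f x ∂P) + (∫ x, f x ∂Nn) := by
    rw [← integral_add_measure (cont_integrable hf Pp) (cont_integrable hf N),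
      ← integral_add_measure (cont_integrable hf P) (cont_integrable hf Nn), hmeq]
  linarith

end Aux

section Discrete

variable {X : Type*} [MetricSpace X] [CompactSpace X] [MeasurableSpace X] [BorelSpace X]

lemma vm_sum_apply {ι : Type*} (s : Finset ι) (v : ι → VectorMeasure X ℝ) (A : Set X) :
    (∑ i ∈ s, v i) A = ∑ i ∈ s, v i A := by
  induction s using Finset.cons_induction with
  | empty => simp
  | cons a t hat ih => simp [Finset.sum_cons, VectorMeasure.add_apply, ih]

lemma pos_neg_part (a : ℝ) : ((a.toNNReal : ℝ)) - (((-a).toNNReal : ℝ)) = a := by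
  rcases le_total 0 a with h | h
  · simp [Real.coe_toNNReal a h, Real.toNNReal_of_nonpos (by linarith : -a ≤ 0)]
  · simp [Real.toNNReal_of_nonpos h, Real.coe_toNNReal (-a) (by linarith)]

theorem discrete_dir (hq : ∀ μ : SignedMeasure X, μ Set.univ = 0 → Ien μ ≤ 0) :
    Quasihypermetric X := by
  intro n α x hsum
  classical
  set μ : SignedMeasure X := ∑ i : Fin n, α i • (Measure.dirac (x i)).toSignedMeasure with hμ
  set P : Measure X := ∑ i : Fin n, ((α i).toNNReal : ℝ≥0∞) • Measure.dirac (x i) with hP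
  set N : Measure X := ∑ i : Fin n, (((-α i).toNNReal : ℝ≥0∞)) • Measure.dirac (x i) with hN
  have hfin : ∀ (c : ℝ≥0) (z : X), ((c : ℝ≥0∞) • Measure.dirac z) Set.univ < ⊤ := by
    intro c z
    rw [Measure.smul_apply, smul_eq_mul]
    exact ENNReal.mul_lt_top ENNReal.coe_lt_top (measure_lt_top (Measure.dirac z) Set.univ)
  have hfin' : ∀ (c : ℝ≥0) (z : X) (s : Set X), ((c : ℝ≥0∞) • Measure.dirac z) s ≠ ⊤ :=
    fun c z s => (lt_of_le_of_lt (measure_mono (Set.subset_univ s)) (hfin c z)).ne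
  have hPfin : IsFiniteMeasure P := by
    constructor
    rw [hP, Measure.finset_sum_apply]
    exact ENNReal.sum_lt_top.mpr (fun i _ => hfin _ _)
  have hNfin : IsFiniteMeasure N := by
    constructor
    rw [hN, Measure.finset_sum_apply]
    exact ENNReal.sum_lt_top.mpr (fun i _ => hfin _ _)
  have happ : ∀ s : Set X, MeasurableSet s → μ s = (P s).toReal - (N s).toReal := by
    intro s hs
    have hdiracs : ∀ i : Fin n, ((Measure.dirac (x i)).toSignedMeasure s : ℝ)
        = ((Measure.dirac (x i)) s).toReal := fun i =>
      Measure.toSignedMeasure_apply_measurable hs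
    rw [hμ, vm_sum_apply]
    rw [hP, hN, Measure.finset_sum_apply, Measure.finset_sum_apply]
    rw [ENNReal.toReal_sum (fun i _ => hfin' _ _ _),
      ENNReal.toReal_sum (fun i _ => hfin' _ _ _)]
    rw [← Finset.sum_sub_distrib]
    apply Finset.sum_congr rfl
    intro i _
    rw [VectorMeasure.smul_apply, hdiracs i]
    simp only [Measure.smul_apply, smul_eq_mul]
    rw [ENNReal.toReal_mul, ENNReal.toReal_mul]
    simp only [ENNReal.coe_toReal]
    rw [← sub_mul, pos_neg_part]
  have hμuniv : μ Set.univ = 0 := by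
    rw [hμ, vm_sum_apply]
    have : ∀ i : Fin n, (α i • (Measure.dirac (x i)).toSignedMeasure) Set.univ = α i := by
      intro i
      rw [VectorMeasure.smul_apply,
        Measure.toSignedMeasure_apply_measurable MeasurableSet.univ]
      simp
    simp only [this]
    exact hsum
  have hint : ∀ {f : X → ℝ}, Continuous f →
      (∫ y, f y ∂P) - (∫ y, f y ∂N) = ∑ i : Fin n, α i * f (x i) := by
    intro f hf
    haveI := hPfin
    haveI := hNfin
    have hP' : (∫ y, f y ∂P) = ∑ i : Fin n, ((α i).toNNReal : ℝ) * f (x i) := by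
      rw [hP, integral_finset_sum_measure (fun i _ => by
        haveI : IsFiniteMeasure (((α i).toNNReal : ℝ≥0∞) • Measure.dirac (x i)) := ⟨hfin _ _⟩
        exact cont_integrable hf _)]
      apply Finset.sum_congr rfl
      intro i _
      rw [integral_smul_measure, integral_dirac' f (x i) hf.stronglyMeasurable]
      simp [smul_eq_mul]
    have hN' : (∫ y, f y ∂N) = ∑ i : Fin n, (((-α i).toNNReal : ℝ)) * f (x i) := by
      rw [hN, integral_finset_sum_measure (fun i _ => by
        haveI : IsFiniteMeasure ((((-α i).toNNReal : ℝ≥0∞)) • Measure.dirac (x i)) := ⟨hfin _ _⟩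
        exact cont_integrable hf _)]
      apply Finset.sum_congr rfl
      intro i _
      rw [integral_smul_measure, integral_dirac' f (x i) hf.stronglyMeasurable]
      simp [smul_eq_mul]
    rw [hP', hN', ← Finset.sum_sub_distrib]
    apply Finset.sum_congr rfl
    intro i _
    rw [← sub_mul, pos_neg_part]
  have hdmu : ∀ z : X, dmu μ z = ∑ j : Fin n, α j * dist z (x j) := by
    intro z
    have hdc : Continuous fun y => dist z y := continuous_const.dist continuous_id
    haveI := hPfin
    haveI := hNfin
    show (∫ y, dist z y ∂μ.toJordanDecomposition.posPart) -
      (∫ y, dist z y ∂μ.toJordanDecomposition.negPart) = _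
    rw [jordan_integral happ hdc]
    exact hint hdc
  have hdmucont : Continuous (dmu μ) := by
    unfold dmu
    exact (int_dist_cont _).sub (int_dist_cont _)
  have hIen : Ien μ = ∑ i : Fin n, ∑ j : Fin n, α i * α j * dist (x i) (x j) := by
    haveI := hPfin
    haveI := hNfin
    rw [Ien, Ibil, jordan_integral happ hdmucont, hint hdmucont]
    apply Finset.sum_congr rfl
    intro i _
    rw [hdmu (x i), Finset.mul_sum]
    apply Finset.sum_congr rfl
    intro j _
    ring
  rw [← hIen]
  exact hq μ hμuniv

end Discrete

section Forward

variable {X : Type*} [MetricSpace X] [CompactSpace X] [MeasurableSpace X] [BorelSpace X]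

lemma exists_partition {δ : ℝ} (hδ : 0 < δ) :
    ∃ (n : ℕ) (c : Fin n → X) (A : Fin n → Set X),
      (∀ i, MeasurableSet (A i)) ∧ Pairwise (Function.onFun Disjoint A) ∧
      (⋃ i, A i) = Set.univ ∧ ∀ i, ∀ z ∈ A i, dist z (c i) ≤ δ := by
  classical
  obtain ⟨t, ht⟩ := isCompact_univ.elim_finite_subcover
    (fun x : X => Metric.ball x δ) (fun x => Metric.isOpen_ball)
    (fun x _ => Set.mem_iUnion.mpr ⟨x, Metric.mem_ball_self hδ⟩)
  set n := t.card with hn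
  set c : Fin n → X := fun i => ((t.equivFin.symm i : X)) with hc
  set f : Fin n → Set X := fun i => Metric.ball (c i) δ with hf
  set A : Fin n → Set X := fun i => f i \ ⋃ (j : Fin n) (_ : j < i), f j with hA
  refine ⟨n, c, A, ?_, ?_, ?_, ?_⟩
  · intro i
    exact (Metric.isOpen_ball.measurableSet).diff
      (MeasurableSet.iUnion fun j => MeasurableSet.iUnion fun _ =>
        Metric.isOpen_ball.measurableSet)
  · have hdis : ∀ i j : Fin n, i < j → Disjoint (A i) (A j) := by
      intro i j hij
      rw [Set.disjoint_left]
      intro z hzi hzj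
      have hz1 : z ∈ f i := hzi.1
      exact hzj.2 (Set.mem_iUnion.mpr ⟨i, Set.mem_iUnion.mpr ⟨hij, hz1⟩⟩)
    intro i j hij
    rcases lt_or_gt_of_ne hij with h | h
    · exact hdis i j h
    · exact (hdis j i h).symm
  · apply Set.eq_univ_of_forall
    intro z
    have hz : z ∈ ⋃ x ∈ t, Metric.ball x δ := ht (Set.mem_univ z)
    have hex : ∃ i : Fin n, z ∈ f i := by
      rw [Set.mem_iUnion₂] at hz
      obtain ⟨y, hyt, hzy⟩ := hz
      exact ⟨t.equivFin ⟨y, hyt⟩, by simp [hf, hc, hzy]⟩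
    set S := Finset.univ.filter (fun i : Fin n => z ∈ f i) with hS
    have hSne : S.Nonempty := by
      obtain ⟨i, hi⟩ := hex
      exact ⟨i, by simp [hS, hi]⟩
    set i₀ := S.min' hSne with hi₀
    have hzi₀ : z ∈ f i₀ := by
      have := S.min'_mem hSne
      simp [hS] at this
      exact this
    refine Set.mem_iUnion.mpr ⟨i₀, hzi₀, ?_⟩
    intro hmem
    rw [Set.mem_iUnion] at hmem
    obtain ⟨j, hj⟩ := hmem
    rw [Set.mem_iUnion] at hj
    obtain ⟨hji, hzj⟩ := hj
    have : i₀ ≤ j := S.min'_le j (by simp [hS, hzj])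
    exact absurd hji (not_lt.mpr this)
  · intro i z hz
    have : z ∈ f i := hz.1
    rw [hf] at this
    exact le_of_lt (by simpa [dist_comm] using this)

lemma set_int_est (σ ρ : Measure X) [IsFiniteMeasure σ] [IsFiniteMeasure ρ]
    {δ : ℝ} (hδ : 0 ≤ δ) {A B : Set X} (hB : MeasurableSet B) {a b : X}
    (ha : ∀ z ∈ A, dist z a ≤ δ) (hb : ∀ z ∈ B, dist z b ≤ δ) :
    |(∫ x in A, ∫ y in B, dist x y ∂ρ ∂σ) - dist a b * ((σ A).toReal * (ρ B).toReal)|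
      ≤ 2 * δ * ((σ A).toReal * (ρ B).toReal) := by
  haveI : IsFiniteMeasure (ρ.restrict B) := inferInstance
  have hBval : (ρ.restrict B) Set.univ = ρ B := by
    rw [Measure.restrict_apply_univ]
  have key1 : ∀ x ∈ A, |(∫ y in B, dist x y ∂ρ) - dist a b * (ρ B).toReal|
      ≤ (2 * δ * (ρ B).toReal) := by
    intro x hx
    have hconst : dist a b * (ρ B).toReal = ∫ _y in B, dist a b ∂ρ := by
      rw [setIntegral_const]; ring_nf; rw [measureReal_def]
    rw [hconst, ← integral_sub ((dist_integrable x ρ).restrict) (integrable_const _)]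
    have := norm_setIntegral_le_of_norm_le_const (μ := ρ) (s := B)
      (f := fun y => dist x y - dist a b) (C := 2 * δ) (measure_lt_top _ _)
      (fun y hy => by
        rw [Real.norm_eq_abs]
        have h1 : dist (dist x y) (dist a b) ≤ dist x a + dist y b :=
          dist_dist_dist_le x y a b
        rw [Real.dist_eq] at h1
        have := ha x hx
        have := hb y hy
        calc |dist x y - dist a b| ≤ dist x a + dist y b := h1
          _ ≤ 2 * δ := by linarith)
    rw [Real.norm_eq_abs] at this
    exact this
  -- outer integral
  have hg : Continuous (fun x => ∫ y in B, dist x y ∂ρ) := int_dist_cont (ρ.restrict B)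
  have hconst2 : dist a b * ((σ A).toReal * (ρ B).toReal)
      = ∫ _x in A, dist a b * (ρ B).toReal ∂σ := by
    rw [setIntegral_const, smul_eq_mul, measureReal_def]; ring
  rw [hconst2, ← integral_sub ((cont_integrable hg σ).restrict) (integrable_const _)]
  have := norm_setIntegral_le_of_norm_le_const (μ := σ) (s := A)
    (f := fun x => (∫ y in B, dist x y ∂ρ) - dist a b * (ρ B).toReal)
    (C := 2 * δ * (ρ B).toReal) (measure_lt_top _ _)
    (fun x hx => by rw [Real.norm_eq_abs]; exact key1 x hx)
  rw [Real.norm_eq_abs] at this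
  exact this.trans (le_of_eq (by rw [measureReal_def]; ring))

lemma sum_measure_toReal (σ : Measure X) [IsFiniteMeasure σ] {n : ℕ} {A : Fin n → Set X}
    (hm : ∀ i, MeasurableSet (A i)) (hd : Pairwise (Function.onFun Disjoint A))
    (hu : (⋃ i, A i) = Set.univ) :
    ∑ i, (σ (A i)).toReal = (σ Set.univ).toReal := by
  rw [← hu, measure_iUnion hd (fun i => hm i), tsum_fintype,
    ENNReal.toReal_sum (fun i _ => measure_ne_top _ _)]

lemma energy_approx (σ ρ : Measure X) [IsFiniteMeasure σ] [IsFiniteMeasure ρ]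
    {δ : ℝ} (hδ : 0 ≤ δ) {n : ℕ} (c : Fin n → X) (A : Fin n → Set X)
    (hm : ∀ i, MeasurableSet (A i)) (hd : Pairwise (Function.onFun Disjoint A))
    (hu : (⋃ i, A i) = Set.univ) (hc : ∀ i, ∀ z ∈ A i, dist z (c i) ≤ δ) :
    |(∫ x, (∫ y, dist x y ∂ρ) ∂σ)
        - ∑ i, ∑ j, (σ (A i)).toReal * (ρ (A j)).toReal * dist (c i) (c j)|
      ≤ 2 * δ * ((σ Set.univ).toReal * (ρ Set.univ).toReal) := by
  have hsplit : (∫ x, (∫ y, dist x y ∂ρ) ∂σ)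
      = ∑ i, ∑ j, ∫ x in A i, ∫ y in A j, dist x y ∂ρ ∂σ := by
    have houter : (∫ x, (∫ y, dist x y ∂ρ) ∂σ)
        = ∑ i, ∫ x in A i, (∫ y, dist x y ∂ρ) ∂σ := by
      rw [← setIntegral_univ, ← hu,
        integral_iUnion_fintype hm hd
          (fun i => (cont_integrable (int_dist_cont ρ) σ).integrableOn)]
    rw [houter]
    apply Finset.sum_congr rfl
    intro i _
    have hinner : ∀ x : X, (∫ y, dist x y ∂ρ) = ∑ j, ∫ y in A j, dist x y ∂ρ := by
      intro x
      rw [← setIntegral_univ, ← hu,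
        integral_iUnion_fintype hm hd (fun j => (dist_integrable x ρ).integrableOn)]
    simp only [hinner]
    rw [integral_finset_sum]
    intro j _
    exact (cont_integrable (int_dist_cont (ρ.restrict (A j))) σ).integrableOn
  rw [hsplit, ← Finset.sum_sub_distrib]
  have hterm : ∀ i : Fin n,
      |(∑ j, ∫ x in A i, ∫ y in A j, dist x y ∂ρ ∂σ)
        - ∑ j, (σ (A i)).toReal * (ρ (A j)).toReal * dist (c i) (c j)|
      ≤ ∑ j, 2 * δ * ((σ (A i)).toReal * (ρ (A j)).toReal) := by
    intro i
    rw [← Finset.sum_sub_distrib]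
    refine (Finset.abs_sum_le_sum_abs _ _).trans ?_
    apply Finset.sum_le_sum
    intro j _
    have := set_int_est σ ρ hδ (hm j) (hc i) (hc j) (A := A i) (a := c i) (b := c j)
    calc |(∫ x in A i, ∫ y in A j, dist x y ∂ρ ∂σ)
          - (σ (A i)).toReal * (ρ (A j)).toReal * dist (c i) (c j)|
        = |(∫ x in A i, ∫ y in A j, dist x y ∂ρ ∂σ)
          - dist (c i) (c j) * ((σ (A i)).toReal * (ρ (A j)).toReal)| := by ring_nf
      _ ≤ 2 * δ * ((σ (A i)).toReal * (ρ (A j)).toReal) := this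
  calc |∑ i, ((∑ j, ∫ x in A i, ∫ y in A j, dist x y ∂ρ ∂σ)
          - ∑ j, (σ (A i)).toReal * (ρ (A j)).toReal * dist (c i) (c j))|
      ≤ ∑ i, |(∑ j, ∫ x in A i, ∫ y in A j, dist x y ∂ρ ∂σ)
          - ∑ j, (σ (A i)).toReal * (ρ (A j)).toReal * dist (c i) (c j)| :=
        Finset.abs_sum_le_sum_abs _ _
    _ ≤ ∑ i, ∑ j, 2 * δ * ((σ (A i)).toReal * (ρ (A j)).toReal) :=
        Finset.sum_le_sum (fun i _ => hterm i)
    _ = 2 * δ * ((σ Set.univ).toReal * (ρ Set.univ).toReal) := by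
        rw [← sum_measure_toReal σ hm hd hu, ← sum_measure_toReal ρ hm hd hu,
          Finset.sum_mul_sum]
        simp only [Finset.mul_sum]
        try exact Finset.sum_congr rfl fun i _ => Finset.sum_congr rfl fun j _ => by ring

theorem forward_dir (hq : Quasihypermetric X) :
    ∀ μ : SignedMeasure X, μ Set.univ = 0 → Ien μ ≤ 0 := by
  intro μ hμ0
  set Pp := μ.toJordanDecomposition.posPart with hPpdef
  set Nn := μ.toJordanDecomposition.negPart with hNndef
  have hpXnn : (0:ℝ) ≤ (Pp Set.univ).toReal := ENNReal.toReal_nonneg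
  have hnXnn : (0:ℝ) ≤ (Nn Set.univ).toReal := ENNReal.toReal_nonneg
  have hpn : (Pp Set.univ).toReal = (Nn Set.univ).toReal := by
    have := jordan_apply μ (MeasurableSet.univ (α := X))
    rw [hμ0] at this
    linarith
  have key : ∀ δ : ℝ, 0 < δ →
      Ien μ ≤ 2 * δ * ((Pp Set.univ).toReal + (Nn Set.univ).toReal) ^ 2 := by
    intro δ hδ
    obtain ⟨n, c, A, hm, hd, hu, hc⟩ := exists_partition (X := X) hδ
    set α : Fin n → ℝ := fun i => (Pp (A i)).toReal - (Nn (A i)).toReal with hα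
    have hsum : ∑ i, α i = 0 := by
      rw [hα]
      simp only
      rw [Finset.sum_sub_distrib, sum_measure_toReal Pp hm hd hu,
        sum_measure_toReal Nn hm hd hu, hpn, sub_self]
    have hQ := hq n α c hsum
    have hdmu_eq : ∀ z : X, dmu μ z = (∫ y, dist z y ∂Pp) - (∫ y, dist z y ∂Nn) := fun z => rfl
    have hIen : Ien μ = ((∫ x, (∫ y, dist x y ∂Pp) ∂Pp) - (∫ x, (∫ y, dist x y ∂Nn) ∂Pp))
        - ((∫ x, (∫ y, dist x y ∂Pp) ∂Nn) - (∫ x, (∫ y, dist x y ∂Nn) ∂Nn)) := by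
      rw [Ien, Ibil]
      simp only [hdmu_eq]
      rw [integral_sub (cont_integrable (int_dist_cont Pp) Pp)
          (cont_integrable (int_dist_cont Nn) Pp),
        integral_sub (cont_integrable (int_dist_cont Pp) Nn)
          (cont_integrable (int_dist_cont Nn) Nn)]
    have h1 := energy_approx Pp Pp (le_of_lt hδ) c A hm hd hu hc
    have h2 := energy_approx Pp Nn (le_of_lt hδ) c A hm hd hu hc
    have h3 := energy_approx Nn Pp (le_of_lt hδ) c A hm hd hu hc
    have h4 := energy_approx Nn Nn (le_of_lt hδ) c A hm hd hu hc
    have hS : ∑ i, ∑ j, α i * α j * dist (c i) (c j)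
        = ((∑ i, ∑ j, (Pp (A i)).toReal * (Pp (A j)).toReal * dist (c i) (c j))
            - (∑ i, ∑ j, (Pp (A i)).toReal * (Nn (A j)).toReal * dist (c i) (c j)))
          - ((∑ i, ∑ j, (Nn (A i)).toReal * (Pp (A j)).toReal * dist (c i) (c j))
            - (∑ i, ∑ j, (Nn (A i)).toReal * (Nn (A j)).toReal * dist (c i) (c j))) := by
      rw [← Finset.sum_sub_distrib, ← Finset.sum_sub_distrib, ← Finset.sum_sub_distrib]
      apply Finset.sum_congr rfl
      intro i _
      rw [← Finset.sum_sub_distrib, ← Finset.sum_sub_distrib, ← Finset.sum_sub_distrib]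
      apply Finset.sum_congr rfl
      intro j _
      rw [hα]
      ring
    have hb1 := abs_le.mp h1
    have hb2 := abs_le.mp h2
    have hb3 := abs_le.mp h3
    have hb4 := abs_le.mp h4
    nlinarith [hb1.1, hb1.2, hb2.1, hb2.2, hb3.1, hb3.2, hb4.1, hb4.2, hQ, hIen, hS]
  by_contra hpos
  push_neg at hpos
  have hB2 : (0:ℝ) ≤ ((Pp Set.univ).toReal + (Nn Set.univ).toReal) ^ 2 := sq_nonneg _
  set B2 := ((Pp Set.univ).toReal + (Nn Set.univ).toReal) ^ 2 with hB2def
  have hD : (0:ℝ) < 4 * (B2 + 1) := by positivity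
  have hk := key (Ien μ / (4 * (B2 + 1))) (by positivity)
  rw [hB2def] at hk
  rw [← hB2def] at hk
  have hk' : Ien μ * (4 * (B2 + 1)) ≤ 2 * Ien μ * B2 := by
    have h := mul_le_mul_of_nonneg_right hk hD.le
    calc Ien μ * (4 * (B2 + 1)) = Ien μ * (4 * (B2 + 1)) := rfl
      _ ≤ 2 * (Ien μ / (4 * (B2 + 1))) * B2 * (4 * (B2 + 1)) := h
      _ = 2 * Ien μ * B2 := by field_simp
  nlinarith [mul_nonneg hpos.le hB2, hpos, hk']
end Forward

/-- A compact metric space is quasihypermetric iff `I(μ) ≤ 0` for every finite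
signed Borel measure `μ` of total mass `0`. -/
theorem stmt_1 {X : Type*} [MetricSpace X] [CompactSpace X]
    [MeasurableSpace X] [BorelSpace X] :
    Quasihypermetric X ↔ ∀ μ : SignedMeasure X, μ Set.univ = 0 → Ien μ ≤ 0 := by
  exact ⟨forward_dir, discrete_dir⟩
end

section
/- Let (X, d) be a compact metric space. The image of the linear map T : M(X) → C(X), T(μ) = d_μ, is a finite-dimensional subspace of C(X) if and only if X is a finite set. -/
open MeasureTheory Filter Topology

lemma cont_integral_dist {X : Type*} [MetricSpace X] [CompactSpace X] [MeasurableSpace X]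
    [OpensMeasurableSpace X] (ν : Measure X) [IsFiniteMeasure ν] :
    Continuous fun x : X => ∫ y, dist x y ∂ν := by
  apply MeasureTheory.continuous_of_dominated
    (bound := fun _ => Metric.diam (Set.univ : Set X))
  · intro x
    exact (continuous_const.dist continuous_id).aestronglyMeasurable
  · intro x
    filter_upwards with y
    rw [Real.norm_eq_abs, abs_of_nonneg dist_nonneg]
    exact Metric.dist_le_diam_of_mem isCompact_univ.isBounded (Set.mem_univ x) (Set.mem_univ y)
  · exact integrable_const _
  · filter_upwards with y
    exact continuous_id.dist continuous_const

/-- The map `T : M(X) → C(X)`, `T(μ) = d_μ`. -/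
noncomputable def Tmap {X : Type*} [MetricSpace X] [CompactSpace X] [MeasurableSpace X]
    [OpensMeasurableSpace X] (μ : SignedMeasure X) : C(X, ℝ) :=
  ⟨dmu μ, (cont_integral_dist _).sub (cont_integral_dist _)⟩


lemma Tmap_dirac_sub {X : Type*} [MetricSpace X] [CompactSpace X] [MeasurableSpace X]
    [BorelSpace X] {a b : X} (hab : a ≠ b) (z : X) :
    Tmap ((Measure.dirac a).toSignedMeasure - (Measure.dirac b).toSignedMeasure) z
      = dist z a - dist z b := by
  have hJ : ((Measure.dirac a).toSignedMeasure - (Measure.dirac b).toSignedMeasure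
      : SignedMeasure X).toJordanDecomposition
      = ⟨Measure.dirac a, Measure.dirac b,
          ⟨{b}, measurableSet_singleton b, by simp [hab], by simp⟩⟩ :=
    MeasureTheory.SignedMeasure.toJordanDecomposition_eq rfl
  show dmu _ z = _
  unfold dmu
  rw [hJ]
  rw [integral_dirac, integral_dirac]

/-- The image of `T : M(X) → C(X)` is a finite-dimensional subspace of `C(X)`
iff `X` is finite. -/
theorem stmt_5 {X : Type*} [MetricSpace X] [CompactSpace X]
    [MeasurableSpace X] [BorelSpace X] :
    FiniteDimensional ℝ (Submodule.span ℝ (Set.range (Tmap (X := X)))) ↔ Finite X := by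
  constructor
  · intro hFD
    by_contra hinf
    -- X is infinite, find an accumulation point p
    have hnd : ¬ DiscreteTopology X := fun h => hinf (finite_of_compact_of_discrete)
    rw [discreteTopology_iff_isOpen_singleton] at hnd
    push_neg at hnd
    obtain ⟨p, hp⟩ := hnd
    -- a sequence of points distinct from p converging to p
    have hseq : ∀ n : ℕ, ∃ y : X, y ≠ p ∧ dist y p < 1 / (n + 1) := by
      intro n
      by_contra hcon
      push_neg at hcon
      apply hp
      rw [Metric.isOpen_iff]
      rintro q rfl
      refine ⟨1 / (n + 1), by positivity, fun y hy => ?_⟩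
      rw [Metric.mem_ball] at hy
      by_contra hy'
      exact absurd hy (not_lt.2 (hcon y hy'))
    choose x hxne hxd using hseq
    have hxp : Tendsto x atTop (𝓝 p) := by
      rw [Metric.tendsto_atTop]
      intro ε hε
      obtain ⟨N, hN⟩ := exists_nat_one_div_lt hε
      refine ⟨N, fun n hn => lt_of_lt_of_le (hxd n) ?_⟩
      apply le_trans _ (le_of_lt hN)
      gcongr

    set r : ℕ → ℝ := fun n => dist (x n) p with hr
    have hrpos : ∀ n, 0 < r n := fun n => dist_pos.2 (hxne n)
    set g : ℕ → C(X, ℝ) := fun n =>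
      Tmap ((Measure.dirac (x n)).toSignedMeasure - (Measure.dirac p).toSignedMeasure) with hg
    have hgz : ∀ n z, g n z = dist z (x n) - dist z p := fun n z =>
      Tmap_dirac_sub (hxne n) z
    set h : ℕ → C(X, ℝ) := fun n => (r n)⁻¹ • g n with hh
    have hhz : ∀ n z, h n z = (r n)⁻¹ * (dist z (x n) - dist z p) := by
      intro n z; simp [hh, hgz n z]
    set S := Submodule.span ℝ (Set.range (Tmap (X := X))) with hS
    have hmem : ∀ n, h n ∈ S := fun n =>
      Submodule.smul_mem _ _ (Submodule.subset_span ⟨_, rfl⟩)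
    set H : ℕ → S := fun n => ⟨h n, hmem n⟩ with hH
    have hnorm : ∀ n, ‖H n‖ ≤ 1 := by
      intro n
      show ‖h n‖ ≤ 1
      refine (ContinuousMap.norm_le _ zero_le_one).2 fun z => ?_
      rw [hhz n z, Real.norm_eq_abs, abs_mul, abs_of_nonneg (inv_nonneg.2 dist_nonneg)]
      rw [inv_mul_le_iff₀ (hrpos n), mul_one]
      calc |dist z (x n) - dist z p| = |dist (x n) z - dist p z| := by
            rw [dist_comm z (x n), dist_comm z p]
        _ ≤ dist (x n) p := abs_dist_sub_le _ _ _
    -- compactness of the closed unit ball of the finite-dimensional subspace S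
    have hcomp : IsCompact (Metric.closedBall (0 : S) 1) :=
      isCompact_closedBall 0 1
    have hHmem : ∀ n, H n ∈ Metric.closedBall (0 : S) 1 := by
      intro n
      rw [Metric.mem_closedBall, dist_zero_right]
      exact hnorm n
    obtain ⟨L, -, φ, hφ, hLim⟩ := hcomp.tendsto_subseq hHmem
    -- evaluation at p gives L p = 1
    have hdist0 : Tendsto (fun k => dist ((H (φ k) : C(X, ℝ))) (L : C(X, ℝ))) atTop (𝓝 0) := by
      have := (tendsto_iff_dist_tendsto_zero).1 hLim
      simpa [Subtype.dist_eq] using this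
    have hcoeLim : Tendsto (fun k => (H (φ k) : C(X, ℝ))) atTop (𝓝 (L : C(X, ℝ))) :=
      tendsto_iff_dist_tendsto_zero.2 hdist0
    have hevalp : Tendsto (fun k => (H (φ k) : C(X, ℝ)) p) atTop (𝓝 ((L : C(X, ℝ)) p)) :=
      ((continuous_eval_const (F := C(X, ℝ)) p).tendsto _).comp hcoeLim
    have hHp : ∀ n, (H n : C(X, ℝ)) p = 1 := by
      intro n
      show h n p = 1
      rw [hhz n p, dist_self, sub_zero, dist_comm p (x n)]
      exact inv_mul_cancel₀ (ne_of_gt (hrpos n))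
    have hLp : (L : C(X, ℝ)) p = 1 := by
      have h1 : Tendsto (fun _ : ℕ => (1 : ℝ)) atTop (𝓝 ((L : C(X, ℝ)) p)) := by
        simpa [hHp] using hevalp
      exact tendsto_nhds_unique h1 tendsto_const_nhds
    -- but at the points x (φ k), values are -1 and converge to L p
    have hHx : ∀ n, (H n : C(X, ℝ)) (x n) = -1 := by
      intro n
      show h n (x n) = -1
      rw [hhz n (x n), dist_self, zero_sub, mul_neg]
      rw [inv_mul_cancel₀ (ne_of_gt (hrpos n))]
    have hxφ : Tendsto (fun k => x (φ k)) atTop (𝓝 p) :=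
      hxp.comp (hφ.tendsto_atTop)
    have hLx : Tendsto (fun k => (L : C(X, ℝ)) (x (φ k))) atTop (𝓝 ((L : C(X, ℝ)) p)) :=
      ((L : C(X, ℝ)).continuous.tendsto p).comp hxφ
    have hdiff : Tendsto (fun k => (L : C(X, ℝ)) (x (φ k)) - (H (φ k) : C(X, ℝ)) (x (φ k)))
        atTop (𝓝 0) := by
      refine squeeze_zero_norm (fun k => ?_) hdist0
      rw [Real.norm_eq_abs, ← Real.dist_eq, dist_comm]
      exact ContinuousMap.dist_apply_le_dist _
    have hLx' : Tendsto (fun k => (L : C(X, ℝ)) (x (φ k))) atTop (𝓝 (-1)) := by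
      have := hdiff.add (tendsto_const_nhds : Tendsto (fun _ : ℕ => (-1:ℝ)) atTop (𝓝 (-1)))
      simp only [zero_add] at this
      convert this using 2 with k
      rw [hHx (φ k)]
      ring
    have : ((L : C(X, ℝ)) p) = -1 := tendsto_nhds_unique hLx hLx'
    rw [hLp] at this
    norm_num at this
  · intro hfin
    have : FiniteDimensional ℝ C(X, ℝ) :=
      FiniteDimensional.of_injective
        (ContinuousMap.coeFnLinearMap ℝ : C(X, ℝ) →ₗ[ℝ] (X → ℝ)) DFunLike.coe_injective
    infer_instance
end

section
/- Let (X, d) be an infinite compact metric space. Then the restriction of the functional I to the subspace M_0(X) of finite signed Borel measures of total mass 0, equipped with the subspace weak-* topology, is discontinuous at every point of M_0(X). -/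
open MeasureTheory Filter Topology

set_option linter.unusedSectionVars false
set_option maxHeartbeats 1000000

/-- Integration of a function against a signed measure, via Jordan decomposition. -/
noncomputable def integSM {X : Type*} [MeasurableSpace X] (μ : SignedMeasure X)
    (f : X → ℝ) : ℝ :=
  (∫ x, f x ∂μ.toJordanDecomposition.posPart) -
  (∫ x, f x ∂μ.toJordanDecomposition.negPart)

/-- The weak-* topology on the space of finite signed Borel measures on `X`,
i.e. the topology induced by the maps `μ ↦ ∫ f dμ` for `f ∈ C(X, ℝ)`. -/
noncomputable def weakStar (X : Type*) [TopologicalSpace X] [MeasurableSpace X] :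
    TopologicalSpace (SignedMeasure X) :=
  TopologicalSpace.induced
    (fun μ : SignedMeasure X => fun f : C(X, ℝ) => integSM μ f) inferInstance

section auxlemmas

/-- Pure algebra: an "almost diagonal" quadratic form estimate. -/
lemma quad_bound {m : ℕ} (c Δ : Fin m → ℝ) (b : Fin m → Fin m → ℝ) (η : ℝ)
    (hη : 0 ≤ η) (hΔ : ∀ j, 0 < Δ j)
    (hdiag : ∀ j, b j j = -2 * Δ j)
    (hoff : ∀ j l, j ≠ l → |b j l| ≤ 2 * η * (Real.sqrt (Δ j) * Real.sqrt (Δ l)))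
    (hm : 2 * (m : ℝ) * η = 1) :
    ∑ j, ∑ l, (c j * c l) * b j l ≤ -∑ j, (c j)^2 * Δ j := by
  classical
  set T : ℝ := ∑ j, (c j)^2 * Δ j with hT
  have key : ∀ j l : Fin m, j ≠ l →
      |(c j * c l) * b j l| ≤ η * ((c j)^2 * Δ j + (c l)^2 * Δ l) := by
    intro j l hjl
    have h1 := hoff j l hjl
    have s1 : Real.sqrt (Δ j) ^ 2 = Δ j := Real.sq_sqrt (hΔ j).le
    have s2 : Real.sqrt (Δ l) ^ 2 = Δ l := Real.sq_sqrt (hΔ l).le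
    have e1 : |(c j * c l) * b j l| = (|c j| * |c l|) * |b j l| := by
      rw [abs_mul, abs_mul]
    have e2 : (|c j| * |c l|) * |b j l|
        ≤ (|c j| * |c l|) * (2 * η * (Real.sqrt (Δ j) * Real.sqrt (Δ l))) :=
      mul_le_mul_of_nonneg_left h1 (by positivity)
    have e3 : (|c j| * |c l|) * (2 * η * (Real.sqrt (Δ j) * Real.sqrt (Δ l)))
        = η * (2 * (|c j| * Real.sqrt (Δ j)) * (|c l| * Real.sqrt (Δ l))) := by ring
    have e4 : 2 * (|c j| * Real.sqrt (Δ j)) * (|c l| * Real.sqrt (Δ l))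
        ≤ (|c j| * Real.sqrt (Δ j))^2 + (|c l| * Real.sqrt (Δ l))^2 :=
      two_mul_le_add_sq _ _
    have e5 : (|c j| * Real.sqrt (Δ j))^2 = (c j)^2 * Δ j := by
      rw [mul_pow, sq_abs, s1]
    have e6 : (|c l| * Real.sqrt (Δ l))^2 = (c l)^2 * Δ l := by
      rw [mul_pow, sq_abs, s2]
    have e7 := mul_le_mul_of_nonneg_left e4 hη
    rw [e5, e6] at e7
    rw [e1]
    calc (|c j| * |c l|) * |b j l| ≤ _ := e2
      _ = _ := e3
      _ ≤ η * ((c j)^2 * Δ j + (c l)^2 * Δ l) := e7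
  have split : ∑ j, ∑ l, (c j * c l) * b j l
      = (∑ j, (c j * c j) * b j j)
        + ∑ j, ∑ l ∈ Finset.univ.erase j, (c j * c l) * b j l := by
    rw [← Finset.sum_add_distrib]
    refine Finset.sum_congr rfl fun j _ => ?_
    exact (Finset.add_sum_erase Finset.univ _ (Finset.mem_univ j)).symm
  have diag : ∑ j, (c j * c j) * b j j = -2 * T := by
    rw [hT, Finset.mul_sum]
    refine Finset.sum_congr rfl fun j _ => ?_
    rw [hdiag j]; ring
  have off : ∑ j, ∑ l ∈ Finset.univ.erase j, (c j * c l) * b j l ≤ T := by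
    have step1 : ∑ j, ∑ l ∈ Finset.univ.erase j, (c j * c l) * b j l
        ≤ ∑ j, ∑ l ∈ Finset.univ.erase j, η * ((c j)^2 * Δ j + (c l)^2 * Δ l) := by
      refine Finset.sum_le_sum fun j _ => Finset.sum_le_sum fun l hl => ?_
      have hjl : j ≠ l := fun h => (Finset.ne_of_mem_erase hl) h.symm
      exact (le_abs_self _).trans (key j l hjl)
    have step2 : ∑ j, ∑ l ∈ Finset.univ.erase j, η * ((c j)^2 * Δ j + (c l)^2 * Δ l)
        ≤ ∑ j, ∑ l : Fin m, η * ((c j)^2 * Δ j + (c l)^2 * Δ l) := by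
      refine Finset.sum_le_sum fun j _ => ?_
      refine Finset.sum_le_sum_of_subset_of_nonneg (Finset.erase_subset _ _) fun l _ _ => ?_
      have := (hΔ j).le; have := (hΔ l).le
      positivity
    have step3 : ∑ j, ∑ l : Fin m, η * ((c j)^2 * Δ j + (c l)^2 * Δ l)
        = η * (2 * (m : ℝ) * T) := by
      simp only [← Finset.mul_sum]
      rw [hT]
      congr 1
      rw [show (2 : ℝ) * m * (∑ j, (c j)^2 * Δ j)
          = ∑ j : Fin m, ((m : ℝ) * ((c j)^2 * Δ j) + ∑ l : Fin m, (c l)^2 * Δ l) by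
        rw [Finset.sum_add_distrib, ← Finset.mul_sum, Finset.sum_const, Finset.card_univ,
          Fintype.card_fin, nsmul_eq_mul]
        ring]
      refine Finset.sum_congr rfl fun j _ => ?_
      rw [Finset.sum_add_distrib, Finset.sum_const, Finset.card_univ, Fintype.card_fin,
        nsmul_eq_mul]
    have heq : η * (2 * (m : ℝ) * T) = T := by
      rw [show η * (2 * (m:ℝ) * T) = (2 * (m:ℝ) * η) * T by ring, hm, one_mul]
    linarith
  rw [split, diag]
  linarith

variable {X : Type*} [MetricSpace X] [CompactSpace X] [MeasurableSpace X] [BorelSpace X]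

lemma integrable_cont {f : X → ℝ} (hf : Continuous f) (P : Measure X)
    (hP : IsFiniteMeasure P) : Integrable f P := by
  haveI := hP
  obtain ⟨C, hC⟩ := (isCompact_univ (X := X)).exists_bound_of_continuousOn hf.continuousOn
  exact (integrable_const C).mono' hf.aestronglyMeasurable
    (Filter.Eventually.of_forall fun x => by simpa using hC x (Set.mem_univ x))

lemma jordan_sub (ν : SignedMeasure X) :
    ν.toJordanDecomposition.posPart.toSignedMeasure -
      ν.toJordanDecomposition.negPart.toSignedMeasure = ν :=
  ν.toSignedMeasure_toJordanDecomposition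

lemma integSM_eq (ν : SignedMeasure X) (P Q : Measure X) [IsFiniteMeasure P] [IsFiniteMeasure Q]
    (h : ν = P.toSignedMeasure - Q.toSignedMeasure) {f : X → ℝ} (hf : Continuous f) :
    integSM ν f = (∫ x, f x ∂P) - ∫ x, f x ∂Q := by
  have hrep : ν.toJordanDecomposition.posPart.toSignedMeasure -
      ν.toJordanDecomposition.negPart.toSignedMeasure
      = P.toSignedMeasure - Q.toSignedMeasure := by
    rw [jordan_sub]; exact h
  have key : ν.toJordanDecomposition.posPart + Q = P + ν.toJordanDecomposition.negPart := by
    rw [← Measure.toSignedMeasure_eq_toSignedMeasure_iff, Measure.toSignedMeasure_add,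
      Measure.toSignedMeasure_add]
    exact sub_eq_sub_iff_add_eq_add.mp hrep
  have h2 : (∫ x, f x ∂ν.toJordanDecomposition.posPart) + ∫ x, f x ∂Q
      = (∫ x, f x ∂P) + ∫ x, f x ∂ν.toJordanDecomposition.negPart := by
    rw [← integral_add_measure (integrable_cont hf _ inferInstance)
        (integrable_cont hf _ inferInstance),
      ← integral_add_measure (integrable_cont hf _ inferInstance)
        (integrable_cont hf _ inferInstance), key]
  unfold integSM
  linarith

lemma integSM_univ (ν : SignedMeasure X) : integSM ν (fun _ => (1 : ℝ)) = ν Set.univ := by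
  have h := congrArg (fun m : SignedMeasure X => m Set.univ) (jordan_sub ν)
  simp only [VectorMeasure.sub_apply] at h
  rw [Measure.toSignedMeasure_apply_measurable MeasurableSet.univ,
    Measure.toSignedMeasure_apply_measurable MeasurableSet.univ] at h
  unfold integSM
  rw [integral_const, integral_const]
  simpa using h

lemma cont_dist_integral (P : Measure X) [IsFiniteMeasure P] :
    Continuous fun x => ∫ y, dist x y ∂P := by
  have hint : ∀ x : X, Integrable (fun y => dist x y) P :=
    fun x => integrable_cont (continuous_const.dist continuous_id) P inferInstance
  have key : ∀ x x' : X, |(∫ y, dist x y ∂P) - ∫ y, dist x' y ∂P|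
      ≤ (P Set.univ).toReal * dist x x' := by
    intro x x'
    rw [← integral_sub (hint x) (hint x')]
    calc |∫ y, (dist x y - dist x' y) ∂P| ≤ ∫ y, |dist x y - dist x' y| ∂P := by
          simpa [Real.norm_eq_abs] using
            norm_integral_le_integral_norm (μ := P) (fun y => dist x y - dist x' y)
      _ ≤ ∫ _, dist x x' ∂P := by
          refine integral_mono ((hint x).sub (hint x')).abs (integrable_const _) fun y => ?_
          exact abs_dist_sub_le x x' y
      _ = (P Set.univ).toReal * dist x x' := by rw [integral_const, smul_eq_mul, measureReal_def]
  rw [Metric.continuous_iff]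
  intro x ε hε
  have h0 : (0:ℝ) ≤ (P Set.univ).toReal := ENNReal.toReal_nonneg
  refine ⟨ε / ((P Set.univ).toReal + 1), by positivity, fun x' hx' => ?_⟩
  rw [Real.dist_eq]
  have h1 := key x' x
  have h2 : (P Set.univ).toReal * dist x' x < ε := by
    have hd : (0:ℝ) ≤ dist x' x := dist_nonneg
    have hpos : (0:ℝ) < (P Set.univ).toReal + 1 := by linarith
    have h3 := mul_lt_mul_of_pos_left hx' hpos
    rw [mul_div_cancel₀ _ (ne_of_gt hpos)] at h3
    nlinarith
  linarith

lemma cont_dmu (ν : SignedMeasure X) : Continuous (dmu ν) := by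
  unfold dmu
  exact (cont_dist_integral _).sub (cont_dist_integral _)

lemma isFiniteMeasure_finsum {ι : Type*} (s : Finset ι) (μs : ι → Measure X)
    (h : ∀ i, IsFiniteMeasure (μs i)) : IsFiniteMeasure (∑ i ∈ s, μs i) := by
  classical
  induction s using Finset.cons_induction with
  | empty => simpa using (inferInstance : IsFiniteMeasure (0 : Measure X))
  | cons a s ha ih => rw [Finset.sum_cons]; haveI := h a; haveI := ih; infer_instance

lemma isFiniteMeasure_ofReal_smul_dirac (a : ℝ) (z : X) :
    IsFiniteMeasure (ENNReal.ofReal a • Measure.dirac z) := by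
  constructor
  rw [Measure.smul_apply, smul_eq_mul]
  simp [ENNReal.ofReal_lt_top]

lemma integral_ofReal_smul_dirac (a : ℝ) (z : X) (f : X → ℝ) :
    ∫ x, f x ∂(ENNReal.ofReal a • Measure.dirac z) = max a 0 * f z := by
  rw [integral_smul_measure, integral_dirac, ENNReal.toReal_ofReal', smul_eq_mul]

lemma exists_points (p : X) (hacc : ∀ r : ℝ, 0 < r → ∃ x : X, x ≠ p ∧ dist x p < r)
    (ε : ℝ) (hε : 0 < ε) :
    ∃ w : ℕ → X, ∀ n, w n ≠ p ∧ dist (w (n+1)) p ≤ ε * dist (w n) p := by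
  have hacc' : ∀ r : ℝ, ∃ x : X, 0 < r → (x ≠ p ∧ dist x p < r) := by
    intro r
    by_cases h : 0 < r
    · obtain ⟨x, hx⟩ := hacc r h; exact ⟨x, fun _ => hx⟩
    · exact ⟨p, fun hr => absurd hr h⟩
  choose g hg using hacc'
  have hg1 : ∀ r : ℝ, 0 < r → g r ≠ p := fun r hr => (hg r hr).1
  have hg2 : ∀ r : ℝ, 0 < r → dist (g r) p < r := fun r hr => (hg r hr).2
  refine ⟨fun n => Nat.rec (g 1) (fun _ x => g (ε * dist x p)) n, ?_⟩
  have base : ∀ n, (Nat.rec (g 1) (fun _ x => g (ε * dist x p)) n : X) ≠ p := by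
    intro n
    induction n with
    | zero => exact hg1 1 one_pos
    | succ k ih => exact hg1 _ (mul_pos hε (dist_pos.2 ih))
  intro n
  exact ⟨base n, (hg2 _ (mul_pos hε (dist_pos.2 (base n)))).le⟩

end auxlemmas

/-- On an infinite compact metric space, the restriction of `I` to `M₀(X)`
(with the subspace weak-* topology) is discontinuous at every point. -/
theorem stmt_11 {X : Type*} [MetricSpace X] [CompactSpace X]
    [MeasurableSpace X] [BorelSpace X] [Infinite X]
    (μ : SignedMeasure X) (hμ : μ Set.univ = 0) :
    ¬ @ContinuousWithinAt (SignedMeasure X) ℝ (weakStar X) _ Ien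
        {ν : SignedMeasure X | ν Set.univ = 0} μ := by
  classical
  intro hcont
  -- Step A : extract a basic neighborhood from the continuity hypothesis
  have h1 : Ien ⁻¹' Metric.ball (Ien μ) 1 ∈
      @nhdsWithin _ (weakStar X) μ {ν : SignedMeasure X | ν Set.univ = 0} :=
    hcont (Metric.ball_mem_nhds _ one_pos)
  obtain ⟨U, hUopen, hμU, hUsub⟩ :=
    (@mem_nhdsWithin (SignedMeasure X) (weakStar X) _ _ _).mp h1
  unfold weakStar at hUopen
  rw [isOpen_induced_iff] at hUopen
  obtain ⟨V, hVopen, hUeq⟩ := hUopen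
  have hμV : (fun f : C(X,ℝ) => integSM μ f) ∈ V := by
    rw [← hUeq] at hμU; exact hμU
  obtain ⟨I, u, hu, hIV⟩ := (isOpen_pi_iff.mp hVopen) _ hμV
  -- Step B : constants
  set m : ℕ := I.card + 1 with hm
  have hm1 : (1 : ℝ) ≤ (m : ℝ) := by
    have : 1 ≤ m := by omega
    exact_mod_cast this
  set η : ℝ := 1 / (2 * (m : ℝ)) with hηdef
  have hηpos : 0 < η := by rw [hηdef]; positivity
  have hηm : 2 * (m : ℝ) * η = 1 := by
    rw [hηdef]; field_simp
  set ε : ℝ := η ^ 2 with hεdef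
  have hεpos : 0 < ε := by rw [hεdef]; positivity
  have hη2 : η ≤ 1 / 2 := by
    rw [hηdef]
    rw [div_le_div_iff₀ (by linarith) (by norm_num)]
    linarith
  have hε1 : ε ≤ 1 := by
    rw [hεdef]; nlinarith
  -- Step C : accumulation point and rapidly converging points
  obtain ⟨p, hp⟩ := exists_nhds_ne_neBot X
  have hacc : ∀ r : ℝ, 0 < r → ∃ x : X, x ≠ p ∧ dist x p < r := by
    intro r hr
    have hball : Metric.ball p r ∩ {p}ᶜ ∈ 𝓝[≠] p :=
      Filter.inter_mem (mem_nhdsWithin_of_mem_nhds (Metric.ball_mem_nhds p hr))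
        self_mem_nhdsWithin
    obtain ⟨x, hx1, hx2⟩ := hp.nonempty_of_mem hball
    exact ⟨x, hx2, by simpa [Metric.mem_ball] using hx1⟩
  obtain ⟨w, hw⟩ := exists_points p hacc ε hεpos
  have hδpos : ∀ n, 0 < dist (w n) p := fun n => dist_pos.2 (hw n).1
  have hδstep : ∀ n, dist (w (n+1)) p ≤ ε * dist (w n) p := fun n => (hw n).2
  have hδmono : ∀ a b : ℕ, a ≤ b → dist (w b) p ≤ dist (w a) p := by
    intro a b hab
    induction b with
    | zero => rw [Nat.le_zero.mp hab]
    | succ k ih =>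
      rcases Nat.lt_or_ge a (k+1) with h | h
      · have h1 := ih (Nat.lt_succ_iff.mp h)
        have h2 := hδstep k
        have h3 : ε * dist (w k) p ≤ dist (w k) p := by
          nlinarith [hδpos k]
        linarith
      · rw [le_antisymm hab h]
  have hδlt : ∀ a b : ℕ, a < b → dist (w b) p ≤ ε * dist (w a) p := by
    intro a b hab
    have h1 : dist (w b) p ≤ dist (w (a+1)) p := hδmono _ _ hab
    have h2 := hδstep a
    linarith
  -- Step D : the kernel vector
  set W : Fin m → X := fun j => w (j : ℕ) with hWdef
  set M : Matrix {f // f ∈ I} (Fin m) ℝ :=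
    fun f j => (f : C(X,ℝ)) (W j) - (f : C(X,ℝ)) p with hMdef
  have hnotinj : ¬ Function.Injective M.mulVecLin := by
    intro hinj
    have hle := LinearMap.finrank_le_finrank_of_injective hinj
    rw [Module.finrank_pi ℝ, Module.finrank_pi ℝ, Fintype.card_coe, Fintype.card_fin] at hle
    omega
  obtain ⟨c₁, c₂, hceq, hcne⟩ := Function.not_injective_iff.mp hnotinj
  set c : Fin m → ℝ := c₁ - c₂ with hcdef
  have hc0 : ∃ j, c j ≠ 0 := by
    by_contra hcon
    push_neg at hcon
    apply hcne
    funext j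
    have := hcon j
    rw [hcdef, Pi.sub_apply] at this
    linarith [sub_eq_zero.mp this]
  have hker : ∀ f : C(X,ℝ), f ∈ I → ∑ j, c j * (f (W j) - f p) = 0 := by
    intro f hf
    have hz : M.mulVecLin c = 0 := by rw [hcdef, map_sub, hceq, sub_self]
    have h2 := congrFun hz ⟨f, hf⟩
    simp only [Matrix.mulVecLin_apply, Matrix.mulVec, dotProduct, hMdef,
      Pi.zero_apply] at h2
    rw [← h2]
    exact Finset.sum_congr rfl fun j _ => by ring
  -- Step E : the auxiliary function and quadratic form
  set hfun : X → ℝ := fun x => ∑ j, c j * (dist x (W j) - dist x p) with hhfun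
  have hcont_h : Continuous hfun := by
    rw [hhfun]
    apply continuous_finset_sum
    intro j _
    exact continuous_const.mul
      ((continuous_id.dist continuous_const).sub (continuous_id.dist continuous_const))
  set Δ : Fin m → ℝ := fun j => dist (W j) p with hΔdef
  have hΔpos : ∀ j, 0 < Δ j := fun j => hδpos _
  set b : Fin m → Fin m → ℝ := fun j l => dist (W j) (W l) - Δ j - Δ l with hbdef
  have hdiag : ∀ j, b j j = -2 * Δ j := by
    intro j
    simp only [hbdef, dist_self]
    ring
  have hbsym : ∀ j l, b j l = b l j := by
    intro j l
    simp only [hbdef]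
    rw [dist_comm (W j) (W l)]
    ring
  have hoff2 : ∀ j l, |b j l| ≤ 2 * Δ l := by
    intro j l
    have h1 : |dist (W j) (W l) - dist (W j) p| ≤ dist (W l) p := by
      have := abs_dist_sub_le (W l) p (W j)
      rwa [dist_comm (W l) (W j), dist_comm p (W j)] at this
    have h2 := abs_le.mp h1
    simp only [hbdef, hΔdef]
    rw [abs_le]
    constructor <;> [linarith [h2.1]; linarith [h2.2, hδpos (l : ℕ)]]
  have hcore : ∀ j l : Fin m, (j : ℕ) < (l : ℕ) →
      |b j l| ≤ 2 * η * (Real.sqrt (Δ j) * Real.sqrt (Δ l)) := by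
    intro j l hjl
    have h1 : Δ l ≤ ε * Δ j := hδlt _ _ hjl
    have hsε : Real.sqrt ε = η := by rw [hεdef]; exact Real.sqrt_sq hηpos.le
    have s1 : Real.sqrt (Δ l) ≤ Real.sqrt (ε * Δ j) := Real.sqrt_le_sqrt h1
    have s2 : Real.sqrt (ε * Δ j) = η * Real.sqrt (Δ j) := by
      rw [Real.sqrt_mul hεpos.le, hsε]
    have s3 : Real.sqrt (Δ l) * Real.sqrt (Δ l) = Δ l := Real.mul_self_sqrt (hΔpos l).le
    have s4 : Real.sqrt (Δ l) ≤ η * Real.sqrt (Δ j) := by rw [← s2]; exact s1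
    have hsl : 0 ≤ Real.sqrt (Δ l) := Real.sqrt_nonneg _
    calc |b j l| ≤ 2 * Δ l := hoff2 j l
      _ = 2 * (Real.sqrt (Δ l) * Real.sqrt (Δ l)) := by rw [s3]
      _ ≤ 2 * ((η * Real.sqrt (Δ j)) * Real.sqrt (Δ l)) := by nlinarith
      _ = 2 * η * (Real.sqrt (Δ j) * Real.sqrt (Δ l)) := by ring
  have hboff : ∀ j l, j ≠ l → |b j l| ≤ 2 * η * (Real.sqrt (Δ j) * Real.sqrt (Δ l)) := by
    intro j l hjl
    have hne : (j : ℕ) ≠ (l : ℕ) := fun h => hjl (Fin.ext h)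
    rcases lt_or_gt_of_ne hne with h | h
    · exact hcore j l h
    · have := hcore l j h
      rw [hbsym j l]
      calc |b l j| ≤ 2 * η * (Real.sqrt (Δ l) * Real.sqrt (Δ j)) := this
        _ = 2 * η * (Real.sqrt (Δ j) * Real.sqrt (Δ l)) := by ring
  have hQQ : ∑ j, c j * (hfun (W j) - hfun p) ≤ -∑ j, (c j)^2 * Δ j := by
    have expand : ∀ j, hfun (W j) - hfun p = ∑ l, c l * b j l := by
      intro j
      simp only [hhfun]
      rw [← Finset.sum_sub_distrib]
      refine Finset.sum_congr rfl fun l _ => ?_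
      simp only [hbdef, hΔdef, dist_self, dist_comm p (W l)]
      ring
    have e : ∑ j, c j * (hfun (W j) - hfun p) = ∑ j, ∑ l, (c j * c l) * b j l := by
      refine Finset.sum_congr rfl fun j _ => ?_
      rw [expand j, Finset.mul_sum]
      exact Finset.sum_congr rfl fun l _ => by ring
    rw [e]
    exact quad_bound c Δ b η hηpos.le hΔpos hdiag hboff hηm
  set T : ℝ := ∑ j, (c j)^2 * Δ j with hTdef
  have hTpos : 0 < T := by
    rw [hTdef]
    obtain ⟨j0, hj0⟩ := hc0
    refine Finset.sum_pos' (fun j _ => mul_nonneg (sq_nonneg _) (hΔpos j).le)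
      ⟨j0, Finset.mem_univ _, ?_⟩
    have h2 : 0 < (c j0)^2 := by
      rcases lt_or_gt_of_ne hj0 with h | h <;> nlinarith
    exact mul_pos h2 (hΔpos j0)
  -- Step F : choice of scaling
  set A : ℝ := ∑ j, c j * (dmu μ (W j) - dmu μ p) with hAdef
  set β : ℝ := integSM μ hfun + A with hβdef
  set s : ℝ := max 1 ((|β| + 2) / T) with hsdef
  have hs1 : 1 ≤ s := le_max_left _ _
  have hspos : 0 < s := lt_of_lt_of_le one_pos hs1
  have hs2 : |β| + 2 ≤ s * T := by
    have h2 : (|β| + 2) / T ≤ s := le_max_right _ _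
    calc |β| + 2 = ((|β| + 2) / T) * T := by field_simp
      _ ≤ s * T := mul_le_mul_of_nonneg_right h2 hTpos.le
  set t : Fin m → ℝ := fun j => s * c j with htdef
  -- Step G : the perturbing measures
  set P1 : Measure X := ∑ j, (ENNReal.ofReal (t j) • Measure.dirac (W j)
      + ENNReal.ofReal (-(t j)) • Measure.dirac p) with hP1def
  set Q1 : Measure X := ∑ j, (ENNReal.ofReal (-(t j)) • Measure.dirac (W j)
      + ENNReal.ofReal (t j) • Measure.dirac p) with hQ1def
  have hfinP1 : IsFiniteMeasure P1 := by
    rw [hP1def]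
    refine isFiniteMeasure_finsum _ _ fun j => ?_
    haveI := isFiniteMeasure_ofReal_smul_dirac (t j) (W j)
    haveI := isFiniteMeasure_ofReal_smul_dirac (-(t j)) p
    infer_instance
  have hfinQ1 : IsFiniteMeasure Q1 := by
    rw [hQ1def]
    refine isFiniteMeasure_finsum _ _ fun j => ?_
    haveI := isFiniteMeasure_ofReal_smul_dirac (-(t j)) (W j)
    haveI := isFiniteMeasure_ofReal_smul_dirac (t j) p
    infer_instance
  haveI := hfinP1
  haveI := hfinQ1
  set ν : SignedMeasure X := μ + (P1.toSignedMeasure - Q1.toSignedMeasure) with hνdef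
  have hrep : ν = (μ.toJordanDecomposition.posPart + P1).toSignedMeasure
      - (μ.toJordanDecomposition.negPart + Q1).toSignedMeasure := by
    rw [Measure.toSignedMeasure_add, Measure.toSignedMeasure_add, hνdef]
    conv_lhs => rw [← jordan_sub μ]
    abel
  -- Step H : the key integration formula
  have keyB : ∀ f : X → ℝ, Continuous f →
      integSM ν f = integSM μ f + ∑ j, t j * (f (W j) - f p) := by
    intro f hf
    rw [integSM_eq ν _ _ hrep hf]
    rw [integral_add_measure (integrable_cont hf _ inferInstance)
        (integrable_cont hf _ hfinP1),
      integral_add_measure (integrable_cont hf _ inferInstance)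
        (integrable_cont hf _ hfinQ1)]
    have hintP : ∫ x, f x ∂P1 = ∑ j, (max (t j) 0 * f (W j) + max (-(t j)) 0 * f p) := by
      rw [hP1def, integral_finset_sum_measure (fun j _ => by
        haveI := isFiniteMeasure_ofReal_smul_dirac (t j) (W j)
        haveI := isFiniteMeasure_ofReal_smul_dirac (-(t j)) p
        exact integrable_cont hf _ inferInstance)]
      refine Finset.sum_congr rfl fun j _ => ?_
      rw [integral_add_measure
          (integrable_cont hf _ (isFiniteMeasure_ofReal_smul_dirac _ _))
          (integrable_cont hf _ (isFiniteMeasure_ofReal_smul_dirac _ _)),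
        integral_ofReal_smul_dirac, integral_ofReal_smul_dirac]
    have hintQ : ∫ x, f x ∂Q1 = ∑ j, (max (-(t j)) 0 * f (W j) + max (t j) 0 * f p) := by
      rw [hQ1def, integral_finset_sum_measure (fun j _ => by
        haveI := isFiniteMeasure_ofReal_smul_dirac (-(t j)) (W j)
        haveI := isFiniteMeasure_ofReal_smul_dirac (t j) p
        exact integrable_cont hf _ inferInstance)]
      refine Finset.sum_congr rfl fun j _ => ?_
      rw [integral_add_measure
          (integrable_cont hf _ (isFiniteMeasure_ofReal_smul_dirac _ _))
          (integrable_cont hf _ (isFiniteMeasure_ofReal_smul_dirac _ _)),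
        integral_ofReal_smul_dirac, integral_ofReal_smul_dirac]
    rw [hintP, hintQ]
    have hμf : integSM μ f = (∫ x, f x ∂μ.toJordanDecomposition.posPart)
        - ∫ x, f x ∂μ.toJordanDecomposition.negPart := rfl
    rw [hμf]
    have per : ∀ j : Fin m, (max (t j) 0 * f (W j) + max (-(t j)) 0 * f p)
        - (max (-(t j)) 0 * f (W j) + max (t j) 0 * f p) = t j * (f (W j) - f p) := by
      intro j
      have hmx := max_zero_sub_max_neg_zero_eq_self (t j)
      linear_combination (f (W j) - f p) * hmx
    rw [show ∑ j, t j * (f (W j) - f p)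
        = ∑ j, ((max (t j) 0 * f (W j) + max (-(t j)) 0 * f p)
          - (max (-(t j)) 0 * f (W j) + max (t j) 0 * f p)) from
      (Finset.sum_congr rfl fun j _ => (per j).symm)]
    rw [Finset.sum_sub_distrib]
    ring
  -- Step I : ν has total mass zero
  have hν0 : ν Set.univ = 0 := by
    rw [← integSM_univ, keyB _ continuous_const, integSM_univ, hμ]
    simp
  -- Step J : ν agrees with μ on the coordinates from I
  have hcoord : ∀ f : C(X,ℝ), f ∈ I → integSM ν f = integSM μ f := by
    intro f hf
    rw [keyB _ f.continuous]
    have e : ∑ j, t j * (f (W j) - f p) = s * ∑ j, c j * (f (W j) - f p) := by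
      rw [Finset.mul_sum]
      refine Finset.sum_congr rfl fun j _ => ?_
      simp only [htdef]
      ring
    rw [e, hker f hf, mul_zero, add_zero]
  -- Step K : dmu of ν
  have hdmuν : ∀ x, dmu ν x = dmu μ x + s * hfun x := by
    intro x
    have e0 : dmu ν x = integSM ν (fun y => dist x y) := rfl
    have e1 : dmu μ x = integSM μ (fun y => dist x y) := rfl
    rw [e0, keyB (fun y => dist x y) (by exact continuous_const.dist continuous_id), ← e1]
    congr 1
    simp only [hhfun, htdef, Finset.mul_sum]
    exact Finset.sum_congr rfl fun j _ => by ring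
  -- Step L : the energy expansion
  have hIen : Ien ν = Ien μ + s * β
      + s^2 * (∑ j, c j * (hfun (W j) - hfun p)) := by
    have e0 : Ien ν = integSM ν (dmu ν) := rfl
    have e1 : Ien μ = integSM μ (dmu μ) := rfl
    have hdmueq : dmu ν = fun x => dmu μ x + s * hfun x := funext hdmuν
    have hcdmu : Continuous fun x => dmu μ x + s * hfun x :=
      (cont_dmu μ).add (continuous_const.mul hcont_h)
    have hkB := keyB (fun x => dmu μ x + s * hfun x) hcdmu
    try simp only at hkB
    rw [e0, hdmueq, hkB]
    have lin : integSM μ (fun x => dmu μ x + s * hfun x)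
        = integSM μ (dmu μ) + s * integSM μ hfun := by
      unfold integSM; beta_reduce
      rw [integral_add (g := fun x => s * hfun x) (integrable_cont (cont_dmu μ) _ inferInstance)
          (integrable_cont (continuous_const.mul hcont_h : Continuous fun x => s * hfun x) _ inferInstance),
        integral_add (g := fun x => s * hfun x) (integrable_cont (cont_dmu μ) _ inferInstance)
          (integrable_cont (continuous_const.mul hcont_h : Continuous fun x => s * hfun x) _ inferInstance),
        integral_const_mul, integral_const_mul]
      ring
    rw [lin]
    have e2 : ∑ j, t j * ((dmu μ (W j) + s * hfun (W j)) - (dmu μ p + s * hfun p))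
        = s * A + s^2 * (∑ j, c j * (hfun (W j) - hfun p)) := by
      calc ∑ j, t j * ((dmu μ (W j) + s * hfun (W j)) - (dmu μ p + s * hfun p))
          = ∑ j, (s * (c j * (dmu μ (W j) - dmu μ p))
            + s^2 * (c j * (hfun (W j) - hfun p))) := by
            refine Finset.sum_congr rfl fun j _ => ?_
            simp only [htdef]
            ring
        _ = (∑ j, s * (c j * (dmu μ (W j) - dmu μ p)))
            + ∑ j, s^2 * (c j * (hfun (W j) - hfun p)) := Finset.sum_add_distrib
        _ = s * (∑ j, c j * (dmu μ (W j) - dmu μ p))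
            + s^2 * ∑ j, c j * (hfun (W j) - hfun p) := by
            rw [Finset.mul_sum, Finset.mul_sum]
        _ = s * A + s^2 * (∑ j, c j * (hfun (W j) - hfun p)) := by rw [hAdef]
    rw [e2, ← e1, hβdef]
    ring
  -- Step M : the numeric bound
  have hEbound : Ien ν - Ien μ ≤ -2 := by
    rw [hIen]
    have hQ2 : ∑ j, c j * (hfun (W j) - hfun p) ≤ -T := by
      rw [hTdef]; exact hQQ
    have h1 : s^2 * (∑ j, c j * (hfun (W j) - hfun p)) ≤ s^2 * (-T) :=
      mul_le_mul_of_nonneg_left hQ2 (sq_nonneg s)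
    have h2 : s * β ≤ s * |β| := mul_le_mul_of_nonneg_left (le_abs_self β) hspos.le
    have h3 : s * (|β| + 2) ≤ s * (s * T) := mul_le_mul_of_nonneg_left hs2 hspos.le
    nlinarith
  -- Step N : contradiction
  have hνU : ν ∈ U := by
    rw [← hUeq]
    apply hIV
    rw [Set.mem_pi]
    intro f hf
    have hfI : f ∈ I := hf
    show integSM ν f ∈ u f
    rw [hcoord f hfI]
    exact (hu f hfI).2
  have hmem := hUsub ⟨hνU, hν0⟩
  rw [Set.mem_preimage, Metric.mem_ball, Real.dist_eq] at hmem
  have habs := neg_abs_le (Ien ν - Ien μ)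
  linarith
end

section
/- Let (X, d) be a compact quasihypermetric space with diameter D(X). Then for every μ ∈ M_0(X), one has −I(μ) ≤ (D(X)/2) · ‖μ‖_M², i.e. the E_0(X)-seminorm ‖μ‖ = (−I(μ))^{1/2} satisfies ‖μ‖ ≤ (D(X)/2)^{1/2} ‖μ‖_M. -/
open MeasureTheory Filter Topology

/-- The total variation norm `‖μ‖_M` of a finite signed Borel measure. -/
noncomputable def normM {X : Type*} [MeasurableSpace X] (μ : SignedMeasure X) : ℝ :=
  (μ.totalVariation Set.univ).toReal


section aux

variable {X : Type*} [MetricSpace X] [CompactSpace X] [MeasurableSpace X] [BorelSpace X]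

lemma integrable_dist_aux (ν : Measure X) [IsFiniteMeasure ν] (x : X) :
    Integrable (fun y => dist x y) ν :=
  (continuous_const.dist continuous_id).integrable_of_hasCompactSupport
    (HasCompactSupport.of_compactSpace _)

/-- `F ν x = ∫ y, dist x y ∂ν`. -/
noncomputable def Fm (ν : Measure X) (x : X) : ℝ := ∫ y, dist x y ∂ν

lemma Fm_nonneg (ν : Measure X) (x : X) : 0 ≤ Fm ν x :=
  integral_nonneg fun y => dist_nonneg

lemma Fm_le (ν : Measure X) [IsFiniteMeasure ν] (x : X) :
    Fm ν x ≤ (ν Set.univ).toReal * Metric.diam (Set.univ : Set X) := by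
  have h : ∀ y, dist x y ≤ Metric.diam (Set.univ : Set X) := fun y =>
    Metric.dist_le_diam_of_mem (isCompact_univ.isBounded) trivial trivial
  calc Fm ν x ≤ ∫ _, Metric.diam (Set.univ : Set X) ∂ν :=
        integral_mono (integrable_dist_aux ν x) (integrable_const _) h
    _ = (ν Set.univ).toReal * Metric.diam (Set.univ : Set X) := by
        rw [integral_const, smul_eq_mul, measureReal_def]

lemma Fm_lipschitz (ν : Measure X) [IsFiniteMeasure ν] :
    LipschitzWith (ν Set.univ).toNNReal (Fm ν) := by
  rw [lipschitzWith_iff_dist_le_mul]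
  intro x x'
  rw [Real.dist_eq, Fm, Fm, ← integral_sub (integrable_dist_aux ν x) (integrable_dist_aux ν x')]
  calc |∫ y, (dist x y - dist x' y) ∂ν| ≤ ∫ y, |dist x y - dist x' y| ∂ν :=
        by simpa [Real.norm_eq_abs] using
          norm_integral_le_integral_norm (μ := ν) (fun y => dist x y - dist x' y)
    _ ≤ ∫ _, dist x x' ∂ν := by
        refine integral_mono ((integrable_dist_aux ν x).sub (integrable_dist_aux ν x')).abs
          (integrable_const _) fun y => ?_
        exact abs_dist_sub_le x x' y
    _ = (ν Set.univ).toReal * dist x x' := by rw [integral_const, smul_eq_mul, measureReal_def]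
    _ = ((ν Set.univ).toNNReal : ℝ) * dist x x' := rfl

lemma Fm_continuous (ν : Measure X) [IsFiniteMeasure ν] : Continuous (Fm ν) :=
  (Fm_lipschitz ν).continuous

lemma integrable_Fm (ν ρ : Measure X) [IsFiniteMeasure ν] [IsFiniteMeasure ρ] :
    Integrable (Fm ν) ρ :=
  (Fm_continuous ν).integrable_of_hasCompactSupport (HasCompactSupport.of_compactSpace _)

lemma integral_Fm_le (ν ρ : Measure X) [IsFiniteMeasure ν] [IsFiniteMeasure ρ] :
    ∫ x, Fm ν x ∂ρ ≤ (ρ Set.univ).toReal * ((ν Set.univ).toReal *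
      Metric.diam (Set.univ : Set X)) := by
  calc ∫ x, Fm ν x ∂ρ
      ≤ ∫ _, (ν Set.univ).toReal * Metric.diam (Set.univ : Set X) ∂ρ :=
        integral_mono (integrable_Fm ν ρ) (integrable_const _) (Fm_le ν)
    _ = _ := by rw [integral_const, smul_eq_mul, measureReal_def]

lemma integral_Fm_nonneg (ν ρ : Measure X) [IsFiniteMeasure ν] [IsFiniteMeasure ρ] :
    0 ≤ ∫ x, Fm ν x ∂ρ :=
  integral_nonneg fun x => Fm_nonneg ν x

end aux

/-- In a compact quasihypermetric space, `−I(μ) ≤ (D(X)/2)·‖μ‖_M²` for all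
`μ ∈ M₀(X)`; equivalently `‖μ‖ = (−I(μ))^{1/2} ≤ (D(X)/2)^{1/2} ‖μ‖_M`. -/
theorem stmt_13 {X : Type*} [MetricSpace X] [CompactSpace X]
    [MeasurableSpace X] [BorelSpace X]
    (hq : ∀ μ : SignedMeasure X, μ Set.univ = 0 → Ien μ ≤ 0)
    (μ : SignedMeasure X) (hμ : μ Set.univ = 0) :
    -Ien μ ≤ (Metric.diam (Set.univ : Set X) / 2) * normM μ ^ 2 ∧
    Real.sqrt (-Ien μ) ≤ Real.sqrt (Metric.diam (Set.univ : Set X) / 2) * normM μ := by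
  set p := μ.toJordanDecomposition.posPart with hp
  set n := μ.toJordanDecomposition.negPart with hn
  set D := Metric.diam (Set.univ : Set X) with hD
  have hD0 : 0 ≤ D := Metric.diam_nonneg
  set mp := (p Set.univ).toReal with hmp
  set mn := (n Set.univ).toReal with hmn
  have hmp0 : 0 ≤ mp := ENNReal.toReal_nonneg
  -- the masses are equal
  have hmass : mp = mn := by
    have := μ.toSignedMeasure_toJordanDecomposition
    have h2 : μ Set.univ = mp - mn := by
      conv_lhs => rw [← this]
      rw [JordanDecomposition.toSignedMeasure,
        MeasureTheory.Measure.toSignedMeasure_sub_apply MeasurableSet.univ]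
      simp only [measureReal_def]; rfl
    rw [hμ] at h2
    linarith
  -- the total variation norm
  have hnorm : normM μ = mp + mn := by
    rw [normM, MeasureTheory.SignedMeasure.totalVariation, Measure.add_apply,
      ENNReal.toReal_add (measure_ne_top _ _) (measure_ne_top _ _)]
  -- expand Ien
  have hdmu : ∀ x, dmu μ x = Fm p x - Fm n x := fun x => rfl
  have hIen : Ien μ = ((∫ x, Fm p x ∂p) - (∫ x, Fm n x ∂p)) -
      ((∫ x, Fm p x ∂n) - (∫ x, Fm n x ∂n)) := by
    rw [Ien, Ibil]
    simp only [hdmu]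
    rw [integral_sub (integrable_Fm p p) (integrable_Fm n p),
      integral_sub (integrable_Fm p n) (integrable_Fm n n)]
  have hb : ∫ x, Fm n x ∂p ≤ mp * (mn * D) := integral_Fm_le n p
  have hc : ∫ x, Fm p x ∂n ≤ mn * (mp * D) := integral_Fm_le p n
  have ha : 0 ≤ ∫ x, Fm p x ∂p := integral_Fm_nonneg p p
  have he : 0 ≤ ∫ x, Fm n x ∂n := integral_Fm_nonneg n n
  have key : -Ien μ ≤ (D / 2) * normM μ ^ 2 := by
    rw [hIen, hnorm, ← hmass]
    rw [← hmass] at hb hc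
    nlinarith [hb, hc, ha, he]
  refine ⟨key, ?_⟩
  have hnn : 0 ≤ normM μ := ENNReal.toReal_nonneg
  calc Real.sqrt (-Ien μ) ≤ Real.sqrt ((D / 2) * normM μ ^ 2) := Real.sqrt_le_sqrt key
    _ = Real.sqrt (D / 2) * normM μ := by
        rw [Real.sqrt_mul (by positivity), Real.sqrt_sq hnn]
end

section
/- Let (X, d) be an infinite compact quasihypermetric space. Then there exists a sequence (μ_n) in M_0(X) such that −I(μ_n) → 0 (i.e. μ_n → 0 in the seminorm of E_0(X)), but (μ_n) converges neither in the weak-* topology on M(X) nor in the total variation norm; in particular ‖μ_n‖_M → ∞. -/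
open MeasureTheory Filter Topology
open scoped NNReal

/-- The Jordan decomposition with positive part `c·δ_z` and negative part `c·δ_p`. -/
noncomputable def dipJD {X : Type*} [MeasurableSpace X] [MeasurableSingletonClass X]
    (z p : X) (h : z ≠ p) (c : ℝ≥0) : MeasureTheory.JordanDecomposition X :=
  ⟨c • MeasureTheory.Measure.dirac z, c • MeasureTheory.Measure.dirac p, by
    refine ⟨{p}, measurableSet_singleton p, ?_, ?_⟩
    · simp [Measure.smul_apply, Measure.dirac_apply' _ (measurableSet_singleton p), h]
    · simp [Measure.smul_apply, Measure.dirac_apply' _ (measurableSet_singleton p).compl]⟩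

section dip
variable {X : Type*} [MetricSpace X] [MeasurableSpace X] [BorelSpace X]

lemma dipJD_toJD (z p : X) (h : z ≠ p) (c : ℝ≥0) :
    (dipJD z p h c).toSignedMeasure.toJordanDecomposition = dipJD z p h c := by
  simp

lemma integSM_dip (z p : X) (h : z ≠ p) (c : ℝ≥0) (f : X → ℝ) :
    integSM (dipJD z p h c).toSignedMeasure f = c * f z - c * f p := by
  simp [integSM, dipJD_toJD, dipJD, integral_smul_nnreal_measure, integral_dirac,
    NNReal.smul_def, smul_eq_mul]

lemma dmu_dip (z p : X) (h : z ≠ p) (c : ℝ≥0) (x : X) :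
    dmu (dipJD z p h c).toSignedMeasure x = c * dist x z - c * dist x p := by
  simp [dmu, dipJD_toJD, dipJD, integral_smul_nnreal_measure, integral_dirac,
    NNReal.smul_def, smul_eq_mul]

lemma Ien_dip (z p : X) (h : z ≠ p) (c : ℝ≥0) :
    Ien (dipJD z p h c).toSignedMeasure = -2 * (c : ℝ)^2 * dist z p := by
  have h1 : Ien (dipJD z p h c).toSignedMeasure
      = integSM (dipJD z p h c).toSignedMeasure
          (fun x => dmu (dipJD z p h c).toSignedMeasure x) := rfl
  rw [h1, integSM_dip, dmu_dip, dmu_dip]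
  simp only [dist_self, dist_comm p z]
  ring

lemma dip_apply (z p : X) (h : z ≠ p) (c : ℝ≥0) {s : Set X} (hs : MeasurableSet s) :
    (dipJD z p h c).toSignedMeasure s
      = ((c • Measure.dirac z : Measure X) s).toReal
        - ((c • Measure.dirac p : Measure X) s).toReal := by
  rw [MeasureTheory.JordanDecomposition.toSignedMeasure]
  rw [MeasureTheory.Measure.toSignedMeasure_sub_apply hs]
  rfl

lemma dip_univ (z p : X) (h : z ≠ p) (c : ℝ≥0) :
    (dipJD z p h c).toSignedMeasure Set.univ = 0 := by
  rw [dip_apply z p h c MeasurableSet.univ]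
  simp

lemma dip_singleton (z p : X) (h : z ≠ p) (c : ℝ≥0) :
    (dipJD z p h c).toSignedMeasure {p} = -(c : ℝ) := by
  rw [dip_apply z p h c (measurableSet_singleton p)]
  simp [Measure.dirac_apply' _ (measurableSet_singleton p), h]

lemma normM_dip (z p : X) (h : z ≠ p) (c : ℝ≥0) :
    normM (dipJD z p h c).toSignedMeasure = 2 * c := by
  rw [normM, SignedMeasure.totalVariation, dipJD_toJD]
  simp [dipJD]
  rw [ENNReal.toReal_add ENNReal.coe_ne_top ENNReal.coe_ne_top]
  simp
  ring

end dip

lemma abs_le_normM {X : Type*} [MeasurableSpace X] (ν : SignedMeasure X) {s : Set X}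
    (hs : MeasurableSet s) : |ν s| ≤ normM ν := by
  have h1 : ν s = (ν.toJordanDecomposition.posPart s).toReal
      - (ν.toJordanDecomposition.negPart s).toReal := by
    conv_lhs => rw [← ν.toSignedMeasure_toJordanDecomposition]
    rw [MeasureTheory.JordanDecomposition.toSignedMeasure,
      MeasureTheory.Measure.toSignedMeasure_sub_apply hs]
    rfl
  have hps : (ν.toJordanDecomposition.posPart s).toReal
      ≤ (ν.toJordanDecomposition.posPart Set.univ).toReal :=
    ENNReal.toReal_mono (measure_ne_top _ _) (measure_mono (Set.subset_univ s))
  have hns : (ν.toJordanDecomposition.negPart s).toReal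
      ≤ (ν.toJordanDecomposition.negPart Set.univ).toReal :=
    ENNReal.toReal_mono (measure_ne_top _ _) (measure_mono (Set.subset_univ s))
  have h2 : normM ν = (ν.toJordanDecomposition.posPart Set.univ).toReal
      + (ν.toJordanDecomposition.negPart Set.univ).toReal := by
    rw [normM, SignedMeasure.totalVariation, Measure.add_apply,
      ENNReal.toReal_add (measure_ne_top _ _) (measure_ne_top _ _)]
  rw [h1, h2]
  have := ENNReal.toReal_nonneg (a := ν.toJordanDecomposition.posPart s)
  have := ENNReal.toReal_nonneg (a := ν.toJordanDecomposition.negPart s)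
  rw [abs_sub_le_iff]
  constructor <;> nlinarith

/-- In an infinite compact quasihypermetric space there is a sequence in `M₀(X)`
converging to `0` in the seminorm of `E₀(X)` which converges neither weak-* nor
in total variation norm; in particular `‖μ_n‖_M → ∞`. -/
theorem stmt_14 {X : Type*} [MetricSpace X] [CompactSpace X]
    [MeasurableSpace X] [BorelSpace X] [Infinite X]
    (hq : ∀ μ : SignedMeasure X, μ Set.univ = 0 → Ien μ ≤ 0) :
    ∃ μs : ℕ → SignedMeasure X,
      (∀ n, μs n Set.univ = 0) ∧
      Tendsto (fun n => -Ien (μs n)) atTop (nhds 0) ∧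
      (¬ ∃ μ : SignedMeasure X, ∀ f : C(X, ℝ),
          Tendsto (fun n => integSM (μs n) f) atTop (nhds (integSM μ f))) ∧
      (¬ ∃ μ : SignedMeasure X,
          Tendsto (fun n => normM (μs n - μ)) atTop (nhds 0)) ∧
      Tendsto (fun n => normM (μs n)) atTop atTop := by
  classical
  obtain ⟨p, -, φ, hφ, hv⟩ := isCompact_univ.tendsto_subseq
    (fun n : ℕ => Set.mem_univ ((Infinite.natEmbedding X) n))
  have key : ∀ ε : ℝ, 0 < ε → ∃ x : X, x ≠ p ∧ dist x p < ε := by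
    intro ε hε
    obtain ⟨N, hN⟩ := (Metric.tendsto_atTop.mp hv) ε hε
    by_cases h1 : (Infinite.natEmbedding X) (φ N) = p
    · refine ⟨(Infinite.natEmbedding X) (φ (N+1)), ?_, hN (N+1) (by omega)⟩
      intro h2
      have h3 : φ (N+1) = φ N := (Infinite.natEmbedding X).injective (h2.trans h1.symm)
      have := hφ.injective h3
      omega
    · exact ⟨_, h1, hN N le_rfl⟩
  have key' : ∀ n : ℕ, ∃ x : X, x ≠ p ∧ dist x p < (((n:ℝ)+1)⁻¹)^3 :=
    fun n => key _ (by positivity)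
  choose z hz1 hz2 using key'
  set d : ℕ → ℝ := fun n => dist (z n) p with hdset
  have hd0 : ∀ n, 0 < d n := fun n => dist_pos.mpr (hz1 n)
  set c : ℕ → ℝ := fun n => Real.sqrt ((((n:ℝ)+1) * d n)⁻¹) with hcset
  have hc0 : ∀ n, 0 ≤ c n := fun n => Real.sqrt_nonneg _
  have hc2 : ∀ n, (c n)^2 * d n = ((n:ℝ)+1)⁻¹ := by
    intro n
    have h1 : (0:ℝ) < ((n:ℝ)+1) * d n := mul_pos (by positivity) (hd0 n)
    show Real.sqrt ((((n:ℝ)+1) * d n)⁻¹) ^ 2 * d n = ((n:ℝ)+1)⁻¹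
    rw [Real.sq_sqrt (le_of_lt (inv_pos.mpr h1))]
    field_simp
    exact mul_inv_cancel₀ (hd0 n).ne'
  have hcge : ∀ n : ℕ, (n:ℝ)+1 ≤ c n := by
    intro n
    show (n:ℝ)+1 ≤ Real.sqrt ((((n:ℝ)+1) * d n)⁻¹)
    rw [Real.le_sqrt' (by positivity)]
    have hn : (0:ℝ) < (n:ℝ)+1 := by positivity
    have hdle : d n ≤ (((n:ℝ)+1)⁻¹)^3 := le_of_lt (hz2 n)
    have h2 : ((n:ℝ)+1) * d n ≤ (((n:ℝ)+1)^2)⁻¹ := by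
      calc ((n:ℝ)+1) * d n ≤ ((n:ℝ)+1) * (((n:ℝ)+1)⁻¹)^3 := by nlinarith [hd0 n]
        _ = (((n:ℝ)+1)^2)⁻¹ := by field_simp
    calc ((n:ℝ)+1)^2 = ((((n:ℝ)+1)^2)⁻¹)⁻¹ := by rw [inv_inv]
      _ ≤ (((n:ℝ)+1) * d n)⁻¹ := inv_anti₀ (mul_pos hn (hd0 n)) h2
  set cn : ℕ → ℝ≥0 := fun n => ⟨c n, hc0 n⟩ with hcn
  have hcnc : ∀ n, ((cn n : ℝ≥0) : ℝ) = c n := fun n => rfl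
  set μs : ℕ → SignedMeasure X :=
    fun n => (dipJD (z n) p (hz1 n) (cn n)).toSignedMeasure with hμs
  refine ⟨μs, fun n => dip_univ _ _ _ _, ?_, ?_, ?_, ?_⟩
  · -- energy tends to 0
    have heq : ∀ n : ℕ, (2:ℝ) * ((n:ℝ)+1)⁻¹ = -Ien (μs n) := by
      intro n
      rw [hμs]
      simp only
      rw [Ien_dip]
      have h := hc2 n
      rw [hcnc]
      show (2:ℝ) * ((n:ℝ)+1)⁻¹ = -(-2 * (c n)^2 * d n)
      rw [← h]; ring
    have h0 : Tendsto (fun n : ℕ => (2:ℝ) * ((n:ℝ)+1)⁻¹) atTop (𝓝 0) := by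
      have h := tendsto_one_div_add_atTop_nhds_zero_nat (𝕜 := ℝ)
      have := h.const_mul (2:ℝ)
      simpa [one_div] using this
    exact h0.congr heq
  · -- not weak-* convergent
    rintro ⟨μ, hμ⟩
    set T : ℕ → C(X, ℝ) →L[ℝ] ℝ :=
      fun n => c n • (ContinuousMap.evalCLM ℝ (z n) - ContinuousMap.evalCLM ℝ p) with hT
    have hTf : ∀ n (f : C(X,ℝ)), T n f = integSM (μs n) f := by
      intro n f
      rw [hμs]
      simp only
      rw [integSM_dip, hcnc]
      simp [hT, ContinuousMap.evalCLM, smul_eq_mul]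
      ring
    have hbdd : ∀ f : C(X,ℝ), ∃ C, ∀ n, ‖T n f‖ ≤ C := by
      intro f
      obtain ⟨C, hC⟩ := (hμ f).norm.bddAbove_range
      exact ⟨C, fun n => by rw [hTf]; exact hC (Set.mem_range_self n)⟩
    obtain ⟨C', hC'⟩ := banach_steinhaus hbdd
    obtain ⟨m, hm⟩ := exists_nat_gt C'
    set g : C(X,ℝ) := ⟨fun x => min (dist x p / d m) 1,
      (Continuous.min ((continuous_id.dist continuous_const).div_const _) continuous_const)⟩
      with hg
    have hgnorm : ‖g‖ ≤ 1 := by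
      rw [ContinuousMap.norm_le _ zero_le_one]
      intro x
      rw [Real.norm_eq_abs, abs_le]
      constructor
      · have h1 : (0:ℝ) ≤ min (dist x p / d m) 1 :=
          le_min (div_nonneg dist_nonneg (le_of_lt (hd0 m))) zero_le_one
        have : g x = min (dist x p / d m) 1 := rfl
        rw [this]; linarith
      · exact min_le_right _ _
    have hgz : g (z m) = 1 := by
      show min (dist (z m) p / d m) 1 = 1
      rw [div_self (ne_of_gt (hd0 m))]
      simp
    have hgp : g p = 0 := by
      show min (dist p p / d m) 1 = 0
      simp [dist_self, le_of_lt (hd0 m)]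
    have hTg : T m g = c m := by
      rw [hT]
      simp [ContinuousMap.evalCLM, smul_eq_mul, hgz, hgp]
    have hle : ‖T m g‖ ≤ C' := by
      calc ‖T m g‖ ≤ ‖T m‖ * ‖g‖ := (T m).le_opNorm g
        _ ≤ C' * 1 := mul_le_mul (hC' m) hgnorm (norm_nonneg _)
            (le_trans (norm_nonneg _) (hC' m))
        _ = C' := mul_one _
    rw [hTg, Real.norm_eq_abs, abs_of_nonneg (hc0 m)] at hle
    have := hcge m
    linarith
  · -- not TV convergent
    rintro ⟨μ, hμ⟩
    have h2 : Tendsto (fun n => (μs n - μ) {p}) atTop (𝓝 0) := by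
      apply squeeze_zero_norm (fun n => ?_) hμ
      rw [Real.norm_eq_abs]
      exact abs_le_normM _ (measurableSet_singleton p)
    have h3 : ∀ n, (μs n - μ) {p} = -(c n) - μ {p} := by
      intro n
      rw [VectorMeasure.sub_apply, hμs]
      simp only
      rw [dip_singleton, hcnc]
    have h4 : Tendsto (fun n => c n) atTop (𝓝 (- μ {p})) := by
      have h5 := (h2.congr h3).add_const (μ {p})
      have h6 := h5.neg
      simpa using h6
    obtain ⟨C, hC⟩ := h4.bddAbove_range
    obtain ⟨m, hm⟩ := exists_nat_gt C
    have h7 := hC (Set.mem_range_self m)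
    have h8 := hcge m
    have : (m:ℝ) + 1 ≤ C := le_trans h8 h7
    linarith
  · -- total variation norm tends to infinity
    apply tendsto_atTop_mono (fun n : ℕ => ?_) tendsto_natCast_atTop_atTop
    rw [hμs]
    simp only
    rw [normM_dip, hcnc]
    have := hcge n
    nlinarith [hc0 n]
end

section
/- Let (X, d) be a compact quasihypermetric space. Then for μ ∈ M_0(X), one has I(μ) = 0 if and only if the function d_μ is constant on X. Equivalently, the null space F = { μ ∈ M_0(X) : −I(μ) = 0 } of the seminorm on E_0(X) equals { μ ∈ M_0(X) : d_μ is a constant function }. -/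
open MeasureTheory Filter Topology

section helpers

variable {Y : Type*} [MetricSpace Y] [CompactSpace Y] [MeasurableSpace Y] [BorelSpace Y]

lemma myInt {f : Y → ℝ} (hf : Continuous f) (ρ : Measure Y) [IsFiniteMeasure ρ] :
    Integrable f ρ :=
  hf.integrable_of_hasCompactSupport
    (IsCompact.of_isClosed_subset isCompact_univ (isClosed_tsupport f) (Set.subset_univ _))

/-- signed integral -/
noncomputable def sInt (μ : SignedMeasure Y) (f : Y → ℝ) : ℝ :=
  (∫ y, f y ∂μ.toJordanDecomposition.posPart) -
  (∫ y, f y ∂μ.toJordanDecomposition.negPart)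

lemma sInt_repr (μ : SignedMeasure Y) (P N : Measure Y) [IsFiniteMeasure P] [IsFiniteMeasure N]
    (h : μ = P.toSignedMeasure - N.toSignedMeasure) {f : Y → ℝ} (hf : Continuous f) :
    sInt μ f = (∫ y, f y ∂P) - ∫ y, f y ∂N := by
  set pp := μ.toJordanDecomposition.posPart with hpp
  set nn := μ.toJordanDecomposition.negPart with hnn
  have key : pp + N = P + nn := by
    ext s hs
    have h1 : μ s = (P s).toReal - (N s).toReal := by
      rw [h, VectorMeasure.sub_apply, Measure.toSignedMeasure_apply_measurable hs,
        Measure.toSignedMeasure_apply_measurable hs]; rfl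
    have h2 : μ s = (pp s).toReal - (nn s).toReal := by
      conv_lhs => rw [← μ.toSignedMeasure_toJordanDecomposition]
      rw [JordanDecomposition.toSignedMeasure, VectorMeasure.sub_apply,
        Measure.toSignedMeasure_apply_measurable hs, Measure.toSignedMeasure_apply_measurable hs]; rfl
    have h3 : (pp s).toReal + (N s).toReal = (P s).toReal + (nn s).toReal := by
      rw [h1] at h2; linarith
    have h4 : ((pp + N) s).toReal = ((P + nn) s).toReal := by
      rw [Measure.add_apply, Measure.add_apply, ENNReal.toReal_add (measure_ne_top _ _)
        (measure_ne_top _ _), ENNReal.toReal_add (measure_ne_top _ _) (measure_ne_top _ _), h3]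
    exact (ENNReal.toReal_eq_toReal_iff' (measure_ne_top _ _) (measure_ne_top _ _)).1 h4
  have hint : ∫ y, f y ∂(pp + N) = ∫ y, f y ∂(P + nn) := by rw [key]
  rw [integral_add_measure (myInt hf _) (myInt hf _),
    integral_add_measure (myInt hf _) (myInt hf _)] at hint
  unfold sInt
  rw [← hpp, ← hnn]
  linarith


lemma jd_eq (μ : SignedMeasure Y) :
    μ = μ.toJordanDecomposition.posPart.toSignedMeasure -
      μ.toJordanDecomposition.negPart.toSignedMeasure :=
  μ.toSignedMeasure_toJordanDecomposition.symm

lemma intdist_lip (ρ : Measure Y) [IsFiniteMeasure ρ] :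
    Continuous (fun x => ∫ y, dist x y ∂ρ) := by
  have hd : ∀ x : Y, Continuous (fun y => dist x y) := fun x => continuous_const.dist continuous_id
  have : LipschitzWith (ρ Set.univ).toNNReal (fun x => ∫ y, dist x y ∂ρ) := by
    apply LipschitzWith.of_dist_le_mul
    intro x x'
    rw [Real.dist_eq, ← Real.norm_eq_abs,
      ← integral_sub (myInt (hd x) ρ) (myInt (hd x') ρ)]
    calc ‖∫ y, (dist x y - dist x' y) ∂ρ‖ ≤ (dist x x') * (ρ Set.univ).toReal := by
          apply norm_integral_le_of_norm_le_const
          filter_upwards with y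
          rw [Real.norm_eq_abs]
          exact abs_dist_sub_le x x' y
      _ = ((ρ Set.univ).toNNReal : ℝ) * dist x x' := by
          rw [mul_comm]; rfl
  exact this.continuous

lemma dmu_cont (μ : SignedMeasure Y) : Continuous (dmu μ) :=
  (intdist_lip _).sub (intdist_lip _)

lemma sInt_add (μ ν : SignedMeasure Y) {f : Y → ℝ} (hf : Continuous f) :
    sInt (μ + ν) f = sInt μ f + sInt ν f := by
  have hadd : μ + ν =
      (μ.toJordanDecomposition.posPart + ν.toJordanDecomposition.posPart).toSignedMeasure -
      (μ.toJordanDecomposition.negPart + ν.toJordanDecomposition.negPart).toSignedMeasure := by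
    rw [Measure.toSignedMeasure_add, Measure.toSignedMeasure_add]
    conv_lhs => rw [jd_eq μ, jd_eq ν]
    abel
  rw [sInt_repr (μ + ν) _ _ hadd hf, sInt_repr μ _ _ (jd_eq μ) hf, sInt_repr ν _ _ (jd_eq ν) hf,
    integral_add_measure (myInt hf _) (myInt hf _),
    integral_add_measure (myInt hf _) (myInt hf _)]
  ring

lemma sInt_neg (μ : SignedMeasure Y) {f : Y → ℝ} (hf : Continuous f) :
    sInt (-μ) f = - sInt μ f := by
  have hneg : -μ = μ.toJordanDecomposition.negPart.toSignedMeasure -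
      μ.toJordanDecomposition.posPart.toSignedMeasure := by
    conv_lhs => rw [jd_eq μ]
    abel
  rw [sInt_repr (-μ) _ _ hneg hf, sInt_repr μ _ _ (jd_eq μ) hf]
  ring

lemma sInt_smul (μ : SignedMeasure Y) {t : ℝ} (ht : 0 ≤ t) {f : Y → ℝ} (hf : Continuous f) :
    sInt (t • μ) f = t * sInt μ f := by
  have hfin : ∀ ρ : Measure Y, IsFiniteMeasure ρ →
      IsFiniteMeasure (ENNReal.ofReal t • ρ) := by
    intro ρ hρ
    refine ⟨?_⟩
    rw [Measure.smul_apply, smul_eq_mul]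
    exact ENNReal.mul_lt_top ENNReal.ofReal_lt_top (measure_lt_top ρ _)
  haveI := hfin μ.toJordanDecomposition.posPart μ.toJordanDecomposition.posPart_finite
  haveI := hfin μ.toJordanDecomposition.negPart μ.toJordanDecomposition.negPart_finite
  have hsm : t • μ =
      (ENNReal.ofReal t • μ.toJordanDecomposition.posPart).toSignedMeasure -
      (ENNReal.ofReal t • μ.toJordanDecomposition.negPart).toSignedMeasure := by
    ext s hs
    rw [VectorMeasure.smul_apply, VectorMeasure.sub_apply,
      Measure.toSignedMeasure_apply_measurable hs, Measure.toSignedMeasure_apply_measurable hs,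
      measureReal_def, measureReal_def, Measure.smul_apply, Measure.smul_apply]
    simp only [smul_eq_mul, ENNReal.toReal_mul, ENNReal.toReal_ofReal ht]
    have : μ s = (μ.toJordanDecomposition.posPart s).toReal -
        (μ.toJordanDecomposition.negPart s).toReal := by
      conv_lhs => rw [jd_eq μ]
      simp [Measure.toSignedMeasure_apply, hs, measureReal_def]
    rw [this]; ring
  rw [sInt_repr (t • μ) (ENNReal.ofReal t • μ.toJordanDecomposition.posPart)
      (ENNReal.ofReal t • μ.toJordanDecomposition.negPart) hsm hf]
  haveI : IsFiniteMeasure μ.toJordanDecomposition.posPart := μ.toJordanDecomposition.posPart_finite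
  haveI : IsFiniteMeasure μ.toJordanDecomposition.negPart := μ.toJordanDecomposition.negPart_finite
  have h2 := sInt_repr μ μ.toJordanDecomposition.posPart μ.toJordanDecomposition.negPart (jd_eq μ) hf
  rw [h2]
  rw [integral_smul_measure, integral_smul_measure, ENNReal.toReal_ofReal ht]
  simp only [smul_eq_mul]
  ring

lemma Ibil_eq_sInt (μ ν : SignedMeasure Y) : Ibil μ ν = sInt μ (dmu ν) := rfl

lemma Ibil_symm (μ ν : SignedMeasure Y) : Ibil μ ν = Ibil ν μ := by
  have hT : ∀ (ρ σ : Measure Y), IsFiniteMeasure ρ → IsFiniteMeasure σ →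
      (∫ x, ∫ y, dist x y ∂σ ∂ρ) = ∫ x, ∫ y, dist x y ∂ρ ∂σ := by
    intro ρ σ hρ hσ
    have hint : Integrable (Function.uncurry (fun x y => dist x y)) (ρ.prod σ) :=
      myInt (continuous_dist.comp (continuous_fst.prodMk continuous_snd)) _
    rw [integral_integral_swap hint]
    congr 1
    ext y
    simp_rw [dist_comm]
  have expand : ∀ (ρ : Measure Y) (ν : SignedMeasure Y), IsFiniteMeasure ρ →
      (∫ x, dmu ν x ∂ρ) = (∫ x, ∫ y, dist x y ∂ν.toJordanDecomposition.posPart ∂ρ) -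
        ∫ x, ∫ y, dist x y ∂ν.toJordanDecomposition.negPart ∂ρ := by
    intro ρ ν hρ
    rw [← integral_sub (myInt (intdist_lip _) ρ) (myInt (intdist_lip _) ρ)]
    rfl
  rw [Ibil, Ibil,
    expand _ ν inferInstance, expand _ ν inferInstance,
    expand _ μ inferInstance, expand _ μ inferInstance,
    hT μ.toJordanDecomposition.posPart ν.toJordanDecomposition.posPart inferInstance inferInstance,
    hT μ.toJordanDecomposition.posPart ν.toJordanDecomposition.negPart inferInstance inferInstance,
    hT μ.toJordanDecomposition.negPart ν.toJordanDecomposition.posPart inferInstance inferInstance,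
    hT μ.toJordanDecomposition.negPart ν.toJordanDecomposition.negPart inferInstance inferInstance]
  ring

lemma Ibil_add_left (μ ν σ : SignedMeasure Y) : Ibil (μ + ν) σ = Ibil μ σ + Ibil ν σ := by
  rw [Ibil_eq_sInt, Ibil_eq_sInt, Ibil_eq_sInt, sInt_add _ _ (dmu_cont σ)]

lemma Ibil_smul_left (μ σ : SignedMeasure Y) {t : ℝ} (ht : 0 ≤ t) :
    Ibil (t • μ) σ = t * Ibil μ σ := by
  rw [Ibil_eq_sInt, Ibil_eq_sInt, sInt_smul _ ht (dmu_cont σ)]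

lemma Ibil_neg_left (μ σ : SignedMeasure Y) : Ibil (-μ) σ = - Ibil μ σ := by
  rw [Ibil_eq_sInt, Ibil_eq_sInt, sInt_neg _ (dmu_cont σ)]

end helpers

/-- In a compact quasihypermetric space, for `μ ∈ M₀(X)` one has `I(μ) = 0` iff
`d_μ` is a constant function on `X`. -/
theorem stmt_15 {X : Type*} [MetricSpace X] [CompactSpace X]
    [MeasurableSpace X] [BorelSpace X]
    (hq : ∀ μ : SignedMeasure X, μ Set.univ = 0 → Ien μ ≤ 0) :
    ∀ μ : SignedMeasure X, μ Set.univ = 0 →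
      (Ien μ = 0 ↔ ∃ c : ℝ, ∀ x : X, dmu μ x = c) := by
  intro μ hμ
  constructor
  · intro hI
    have hI' : Ibil μ μ = 0 := hI
    have key : ∀ ν : SignedMeasure X, ν Set.univ = 0 → Ibil μ ν ≤ 0 := by
      intro ν hν
      have expand : ∀ t : ℝ, 0 ≤ t → Ien (μ + t • ν) =
          2 * t * Ibil μ ν + t ^ 2 * Ibil ν ν := by
        intro t ht
        have h1 : Ien (μ + t • ν) = Ibil μ (μ + t • ν) + t * Ibil ν (μ + t • ν) := by
          rw [Ien, Ibil_add_left, Ibil_smul_left _ _ ht]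
        rw [h1, Ibil_symm μ (μ + t • ν), Ibil_symm ν (μ + t • ν), Ibil_add_left, Ibil_add_left,
          Ibil_smul_left _ _ ht, Ibil_smul_left _ _ ht, Ibil_symm ν μ, hI']
        ring
      have hle : ∀ t : ℝ, 0 < t → 2 * Ibil μ ν + t * Ibil ν ν ≤ 0 := by
        intro t ht
        have h0 : (μ + t • ν) Set.univ = 0 := by
          rw [VectorMeasure.add_apply, VectorMeasure.smul_apply, hμ, hν]
          simp
        have h2 := hq _ h0
        rw [expand t ht.le] at h2
        nlinarith
      have hIν : Ibil ν ν ≤ 0 := hq ν hν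
      by_contra hpos
      push_neg at hpos
      rcases eq_or_lt_of_le hIν with h0 | hneg
      · have := hle 1 one_pos
        rw [← h0] at this
        linarith
      · have ht : 0 < Ibil μ ν / (-(Ibil ν ν)) := div_pos hpos (by linarith)
        have h3 := hle _ ht
        have hne : Ibil ν ν ≠ 0 := ne_of_lt hneg
        have heq : Ibil μ ν / (-(Ibil ν ν)) * Ibil ν ν = -Ibil μ ν := by
          rw [div_mul_eq_mul_div, div_eq_iff (by intro h; apply hne; linarith :
            -Ibil ν ν ≠ 0)]
          ring
        rw [heq] at h3
        linarith
    have keyB : ∀ ν : SignedMeasure X, ν Set.univ = 0 → Ibil μ ν = 0 := by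
      intro ν hν
      have h1 := key ν hν
      have h2 := key (-ν) (by rw [VectorMeasure.neg_apply, hν]; ring)
      rw [Ibil_symm μ (-ν), Ibil_neg_left, Ibil_symm ν μ] at h2
      linarith
    rcases isEmpty_or_nonempty X with hX | hX
    · exact ⟨0, fun x => (IsEmpty.false x).elim⟩
    · obtain ⟨x₀⟩ := hX
      refine ⟨dmu μ x₀, fun x => ?_⟩
      set ν : SignedMeasure X := (Measure.dirac x).toSignedMeasure -
        (Measure.dirac x₀).toSignedMeasure with hνdef
      have hν0 : ν Set.univ = 0 := by
        rw [hνdef, VectorMeasure.sub_apply,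
          Measure.toSignedMeasure_apply_measurable MeasurableSet.univ,
          Measure.toSignedMeasure_apply_measurable MeasurableSet.univ]
        simp
      have hB := keyB ν hν0
      rw [Ibil_symm] at hB
      have hval : Ibil ν μ = dmu μ x - dmu μ x₀ := by
        rw [Ibil_eq_sInt, sInt_repr ν (Measure.dirac x) (Measure.dirac x₀) hνdef (dmu_cont μ),
          integral_dirac' _ _ (dmu_cont μ).stronglyMeasurable,
          integral_dirac' _ _ (dmu_cont μ).stronglyMeasurable]
      rw [hval] at hB
      linarith
  · rintro ⟨c, hc⟩
    have hd : dmu μ = fun _ => c := funext hc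
    have h1 : Ien μ = sInt μ (fun _ => c) := by rw [Ien, Ibil_eq_sInt, hd]
    rw [h1]
    unfold sInt
    rw [integral_const, integral_const]
    have h2 : μ Set.univ = (μ.toJordanDecomposition.posPart Set.univ).toReal -
        (μ.toJordanDecomposition.negPart Set.univ).toReal := by
      conv_lhs => rw [jd_eq μ]
      rw [VectorMeasure.sub_apply,
        Measure.toSignedMeasure_apply_measurable MeasurableSet.univ,
        Measure.toSignedMeasure_apply_measurable MeasurableSet.univ]; rfl
    rw [hμ] at h2
    have h3 : (μ.toJordanDecomposition.posPart Set.univ).toReal =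
        (μ.toJordanDecomposition.negPart Set.univ).toReal := by linarith
    rw [measureReal_def, measureReal_def, h3]
    simp
end
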